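/- arXiv:2205.11924 — 5 statements merged into one kernel-verified Lean document; each statement's English description precedes it below -/
import Mathlib

section
/- Let G be a finitely generated virtually nilpotent group that is not virtually abelian. Then G has a Schreier growth gap n⁴: for every faithful G-set X there exists a constant C ≥ 1 such that n⁴ ≤ C · vol_{G,X}(C·n) for all n ≥ 1. -/
/-- The ball of radius `n` in `G` w.r.t. `S`: products of at most `n` elements of `S`. -/
def wordBall {G : Type*} [Group G] (S : Set G) (n : ℕ) : Set G :=
  {g | ∃ l : List G, l.length ≤ n ∧ (∀ s ∈ l, s ∈ S) ∧ l.prod = g}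

/-- The growth function of the action of `G` on `X`, relative to the generating set `S`:
`vol_{G,X}(n)` is the maximal cardinality of a ball of radius `n` in the Schreier graph. -/
noncomputable def actionGrowth (G : Type*) [Group G] (X : Type*) [MulAction G X]
    (S : Set G) (n : ℕ) : ℕ :=
  ⨆ x : X, Set.ncard ((fun g : G => g • x) '' wordBall S n)

/-- `G` has a Schreier growth gap `f` if for every finite symmetric generating set `S` and every
faithful nonempty `G`-set `X` there is `C ≥ 1` with `f n ≤ C * vol_{G,X}(C * n)` for `n ≥ 1`. -/
def SchreierGrowthGap (G : Type*) [Group G] (f : ℕ → ℝ) : Prop :=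
  ∀ (S : Set G), S.Finite → (∀ s ∈ S, s⁻¹ ∈ S) → Subgroup.closure S = ⊤ →
    ∀ (X : Type*) [MulAction G X] [Nonempty X] [FaithfulSMul G X],
      ∃ C : ℕ, 1 ≤ C ∧ ∀ n : ℕ, 1 ≤ n →
        f n ≤ (C : ℝ) * (actionGrowth G X S (C * n) : ℝ)

/-- `G` is virtually abelian. -/
def VirtuallyAbelian (G : Type*) [Group G] : Prop :=
  ∃ H : Subgroup G, H.FiniteIndex ∧ ∀ a b : ↥H, a * b = b * a

/-- `G` is virtually nilpotent. -/
def VirtuallyNilpotent (G : Type*) [Group G] : Prop :=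
  ∃ H : Subgroup G, H.FiniteIndex ∧ Group.IsNilpotent ↥H

set_option linter.unusedVariables false
set_option linter.deprecated false

namespace SGG

open scoped commutatorElement


variable {G : Type*} [Group G] {S : Set G}

lemma one_mem_wordBall (S : Set G) (n : ℕ) : (1:G) ∈ wordBall S n :=
  ⟨[], by simp, by simp, rfl⟩

lemma wordBall_mono {m n : ℕ} (h : m ≤ n) : wordBall S m ⊆ wordBall S n := by
  rintro g ⟨l, hl, hS, rfl⟩
  exact ⟨l, hl.trans h, hS, rfl⟩

lemma mem_wordBall_one {s : G} (hs : s ∈ S) : s ∈ wordBall S 1 :=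
  ⟨[s], by simp, by simpa using hs, by simp⟩

lemma mul_mem_wordBall {g h : G} {m n : ℕ} (hg : g ∈ wordBall S m)
    (hh : h ∈ wordBall S n) : g * h ∈ wordBall S (m + n) := by
  obtain ⟨l, hl, hlS, rfl⟩ := hg
  obtain ⟨l', hl', hlS', rfl⟩ := hh
  refine ⟨l ++ l', ?_, ?_, by simp⟩
  · simpa using Nat.add_le_add hl hl'
  · intro s hs; rcases List.mem_append.1 hs with h | h
    · exact hlS s h
    · exact hlS' s h

lemma inv_mem_wordBall (hSsym : ∀ s ∈ S, s⁻¹ ∈ S) {g : G} {m : ℕ}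
    (hg : g ∈ wordBall S m) : g⁻¹ ∈ wordBall S m := by
  obtain ⟨l, hl, hlS, rfl⟩ := hg
  refine ⟨(l.map (·⁻¹)).reverse, by simpa using hl, ?_, ?_⟩
  · intro s hs
    simp only [List.mem_reverse, List.mem_map] at hs
    obtain ⟨t, ht, rfl⟩ := hs
    exact hSsym t (hlS t ht)
  · rw [List.prod_inv_reverse]

lemma pow_mem_wordBall {g : G} {m : ℕ} (hg : g ∈ wordBall S m) (k : ℕ) :
    g ^ k ∈ wordBall S (k * m) := by
  induction k with
  | zero => simpa using one_mem_wordBall S 0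
  | succ k ih =>
      have := mul_mem_wordBall ih hg
      rw [pow_succ]
      convert this using 2
      ring

lemma wordBall_finite (hS : S.Finite) (n : ℕ) : (wordBall S n).Finite := by
  induction n with
  | zero =>
      apply Set.Finite.subset (Set.finite_singleton (1:G))
      rintro g ⟨l, hl, -, rfl⟩
      interval_cases h : l.length
      · simp [List.length_eq_zero_iff.1 h]
  | succ n ih =>
      apply Set.Finite.subset (((hS.image2 (· * ·) ih)).insert 1)
      rintro g ⟨l, hl, hlS, rfl⟩
      cases l with
      | nil => simp
      | cons s t =>
          right
          refine Set.mem_image2_of_mem (hlS s (by simp)) ⟨t, ?_, fun u hu => hlS u (by simp [hu]), rfl⟩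
          exact Nat.lt_succ_iff.mp (by simpa using Nat.lt_of_lt_of_le (Nat.lt_succ_self _) hl)




variable {G : Type*} [Group G]

section HCalc

variable {a b z : G}

lemma ex_b (hab : a * b = z * (b * a)) (hza : Commute z a) :
    ∀ p : ℤ, a ^ p * b = z ^ p * (b * a ^ p) := by
  have hab_inv : a⁻¹ * b = z⁻¹ * (b * a⁻¹) := by
    have h1 : b * a = z⁻¹ * (a * b) := by rw [hab]; group
    have h2 : z⁻¹ * a⁻¹ = a⁻¹ * z⁻¹ := (hza.inv_left.inv_right).eq
    calc a⁻¹ * b = a⁻¹ * (b * a) * a⁻¹ := by group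
      _ = a⁻¹ * (z⁻¹ * (a * b)) * a⁻¹ := by rw [h1]
      _ = (a⁻¹ * z⁻¹) * (a * b) * a⁻¹ := by group
      _ = (z⁻¹ * a⁻¹) * (a * b) * a⁻¹ := by rw [← h2]
      _ = z⁻¹ * (b * a⁻¹) := by group
  intro p
  induction p using Int.induction_on with
  | zero => simp
  | succ p ih =>
      have hzap : z * a ^ (p:ℤ) = a ^ (p:ℤ) * z := (hza.zpow_right (p:ℤ)).eq
      calc a ^ ((p:ℤ)+1) * b = a ^ (p:ℤ) * (a * b) := by rw [zpow_add_one]; group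
        _ = a ^ (p:ℤ) * (z * (b * a)) := by rw [hab]
        _ = (a ^ (p:ℤ) * z) * (b * a) := by group
        _ = (z * a ^ (p:ℤ)) * (b * a) := by rw [← hzap]
        _ = z * (a ^ (p:ℤ) * b) * a := by group
        _ = z * (z ^ (p:ℤ) * (b * a ^ (p:ℤ))) * a := by rw [ih]
        _ = z ^ ((p:ℤ)+1) * (b * a ^ ((p:ℤ)+1)) := by
              rw [zpow_add_one, zpow_add_one]; group
  | pred p ih =>
      have hzap : z⁻¹ * a ^ (-(p:ℤ)) = a ^ (-(p:ℤ)) * z⁻¹ :=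
        ((hza.zpow_right (-(p:ℤ))).inv_left).eq
      calc a ^ (-(p:ℤ)-1) * b = a ^ (-(p:ℤ)) * (a⁻¹ * b) := by rw [zpow_sub_one]; group
        _ = a ^ (-(p:ℤ)) * (z⁻¹ * (b * a⁻¹)) := by rw [hab_inv]
        _ = (a ^ (-(p:ℤ)) * z⁻¹) * (b * a⁻¹) := by group
        _ = (z⁻¹ * a ^ (-(p:ℤ))) * (b * a⁻¹) := by rw [hzap]
        _ = z⁻¹ * (a ^ (-(p:ℤ)) * b) * a⁻¹ := by group
        _ = z⁻¹ * (z ^ (-(p:ℤ)) * (b * a ^ (-(p:ℤ)))) * a⁻¹ := by rw [ih]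
        _ = z ^ (-(p:ℤ)-1) * (b * a ^ (-(p:ℤ)-1)) := by
              rw [zpow_sub_one, zpow_sub_one]; group

lemma ex_binv (hab : a * b = z * (b * a)) (hza : Commute z a) (hzb : Commute z b) (p : ℤ) :
    a ^ p * b⁻¹ = z ^ (-p) * (b⁻¹ * a ^ p) := by
  have h := ex_b hab hza p
  have hr : b * a ^ p = z ^ (-p) * (a ^ p * b) := by rw [h]; group
  have hzb' : b⁻¹ * z ^ (-p : ℤ) = z ^ (-p:ℤ) * b⁻¹ := ((hzb.zpow_left (-p:ℤ)).inv_right).eq.symm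
  calc a ^ p * b⁻¹ = b⁻¹ * (b * a ^ p) * b⁻¹ := by group
    _ = b⁻¹ * (z ^ (-p) * (a ^ p * b)) * b⁻¹ := by rw [hr]
    _ = (b⁻¹ * z ^ (-p)) * (a ^ p * (b * b⁻¹)) := by group
    _ = (z ^ (-p) * b⁻¹) * (a ^ p * (b * b⁻¹)) := by rw [hzb']
    _ = z ^ (-p) * (b⁻¹ * a ^ p) := by group

/-- Main exchange: `a^p * b^q = z^(p*q) * (b^q * a^p)`. -/
lemma ex_bq (hab : a * b = z * (b * a)) (hza : Commute z a) (hzb : Commute z b) (p : ℤ) :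
    ∀ q : ℤ, a ^ p * b ^ q = z ^ (p * q) * (b ^ q * a ^ p) := by
  intro q
  induction q using Int.induction_on with
  | zero => simp
  | succ q ih =>
      have h1 := ex_b hab hza p
      have hc : b ^ (q:ℤ) * z ^ p = z ^ p * b ^ (q:ℤ) := ((hzb.zpow_left p).zpow_right (q:ℤ)).eq.symm
      calc a ^ p * b ^ ((q:ℤ)+1) = (a ^ p * b ^ (q:ℤ)) * b := by rw [zpow_add_one]; group
        _ = (z ^ (p*(q:ℤ)) * (b ^ (q:ℤ) * a ^ p)) * b := by rw [ih]
        _ = z ^ (p*(q:ℤ)) * b ^ (q:ℤ) * (a ^ p * b) := by group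
        _ = z ^ (p*(q:ℤ)) * b ^ (q:ℤ) * (z ^ p * (b * a ^ p)) := by rw [h1]
        _ = z ^ (p*(q:ℤ)) * (b ^ (q:ℤ) * z ^ p) * (b * a ^ p) := by group
        _ = z ^ (p*(q:ℤ)) * (z ^ p * b ^ (q:ℤ)) * (b * a ^ p) := by rw [hc]
        _ = z ^ (p * ((q:ℤ)+1)) * (b ^ ((q:ℤ)+1) * a ^ p) := by
              rw [show p * ((q:ℤ)+1) = p * (q:ℤ) + p by ring, zpow_add, zpow_add_one]; group
  | pred q ih =>
      have h1 := ex_binv hab hza hzb p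
      have hc : b ^ (-(q:ℤ)) * z ^ (-p) = z ^ (-p) * b ^ (-(q:ℤ)) :=
        ((hzb.zpow_left (-p)).zpow_right (-(q:ℤ))).eq.symm
      calc a ^ p * b ^ (-(q:ℤ)-1) = (a ^ p * b ^ (-(q:ℤ))) * b⁻¹ := by rw [zpow_sub_one]; group
        _ = (z ^ (p*(-(q:ℤ))) * (b ^ (-(q:ℤ)) * a ^ p)) * b⁻¹ := by rw [ih]
        _ = z ^ (p*(-(q:ℤ))) * b ^ (-(q:ℤ)) * (a ^ p * b⁻¹) := by group
        _ = z ^ (p*(-(q:ℤ))) * b ^ (-(q:ℤ)) * (z ^ (-p) * (b⁻¹ * a ^ p)) := by rw [h1]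
        _ = z ^ (p*(-(q:ℤ))) * (b ^ (-(q:ℤ)) * z ^ (-p)) * (b⁻¹ * a ^ p) := by group
        _ = z ^ (p*(-(q:ℤ))) * (z ^ (-p) * b ^ (-(q:ℤ))) * (b⁻¹ * a ^ p) := by rw [hc]
        _ = z ^ (p * (-(q:ℤ)-1)) * (b ^ (-(q:ℤ)-1) * a ^ p) := by
              rw [show p * (-(q:ℤ)-1) = p * (-(q:ℤ)) + -p by ring, zpow_add, zpow_sub_one]
              group

end HCalc



section NF

variable {G : Type*} [Group G] {a b z : G}

lemma nf_za (hza : Commute z a) (p q : ℤ) : a ^ q * z ^ p = z ^ p * a ^ q :=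
  ((hza.zpow_left p).zpow_right q).eq.symm
lemma nf_zb (hzb : Commute z b) (p q : ℤ) : b ^ q * z ^ p = z ^ p * b ^ q :=
  ((hzb.zpow_left p).zpow_right q).eq.symm
lemma nf_za' (hza : Commute z a) (p q : ℤ) (w : G) :
    a ^ q * (z ^ p * w) = z ^ p * (a ^ q * w) := by
  rw [← mul_assoc, nf_za hza, mul_assoc]
lemma nf_zb' (hzb : Commute z b) (p q : ℤ) (w : G) :
    b ^ q * (z ^ p * w) = z ^ p * (b ^ q * w) := by
  rw [← mul_assoc, nf_zb hzb, mul_assoc]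
lemma nf_ba (hab : a * b = z * (b * a)) (hza : Commute z a) (hzb : Commute z b) (p q : ℤ) :
    b ^ q * a ^ p = z ^ (-(p*q)) * (a ^ p * b ^ q) := by
  rw [ex_bq hab hza hzb p q]; group
lemma nf_ba' (hab : a * b = z * (b * a)) (hza : Commute z a) (hzb : Commute z b) (p q : ℤ)
    (w : G) : b ^ q * (a ^ p * w) = z ^ (-(p*q)) * (a ^ p * (b ^ q * w)) := by
  rw [← mul_assoc, nf_ba hab hza hzb, mul_assoc, mul_assoc]
lemma nf_zz (p q : ℤ) : (z:G) ^ p * z ^ q = z ^ (p+q) := (zpow_add z p q).symm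
lemma nf_zz' (p q : ℤ) (w : G) : z ^ p * (z ^ q * w) = z ^ (p+q) * w := by
  rw [← mul_assoc, nf_zz]
lemma nf_aa (p q : ℤ) : (a:G) ^ p * a ^ q = a ^ (p+q) := (zpow_add a p q).symm
lemma nf_aa' (p q : ℤ) (w : G) : a ^ p * (a ^ q * w) = a ^ (p+q) * w := by
  rw [← mul_assoc, nf_aa]
lemma nf_bb (p q : ℤ) : (b:G) ^ p * b ^ q = b ^ (p+q) := (zpow_add b p q).symm
lemma nf_bb' (p q : ℤ) (w : G) : b ^ p * (b ^ q * w) = b ^ (p+q) * w := by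
  rw [← mul_assoc, nf_bb]

lemma nf_mul (hab : a * b = z * (b * a)) (hza : Commute z a) (hzb : Commute z b)
    (i j k i' j' k' : ℤ) :
    (z ^ k * a ^ i * b ^ j) * (z ^ k' * a ^ i' * b ^ j')
      = z ^ (k + k' - i' * j) * a ^ (i + i') * b ^ (j + j') := by
  simp only [mul_assoc, nf_ba' hab hza hzb, nf_ba hab hza hzb, nf_za' hza, nf_za hza,
    nf_zb' hzb, nf_zb hzb, nf_zz', nf_zz, nf_aa', nf_aa, nf_bb', nf_bb]
  group

lemma nf_inv (hab : a * b = z * (b * a)) (hza : Commute z a) (hzb : Commute z b) (i j k : ℤ) :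
    (z ^ k * a ^ i * b ^ j)⁻¹ = z ^ (-k - i*j) * a ^ (-i) * b ^ (-j) := by
  rw [show (z ^ k * a ^ i * b ^ j)⁻¹ = b ^ (-j) * (a ^ (-i) * z ^ (-k)) by group]
  simp only [mul_assoc, nf_ba' hab hza hzb, nf_ba hab hza hzb, nf_za' hza, nf_za hza,
    nf_zb' hzb, nf_zb hzb, nf_zz', nf_zz, nf_aa', nf_aa, nf_bb', nf_bb]
  group

lemma nf_conj_a (hab : a * b = z * (b * a)) (hza : Commute z a) (hzb : Commute z b)
    (α i j E : ℤ) :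
    a ^ (-α) * ((z ^ E * a ^ i * b ^ j) * a ^ α) = z ^ (E - α*j) * a ^ i * b ^ j := by
  simp only [mul_assoc, nf_ba' hab hza hzb, nf_ba hab hza hzb, nf_za' hza, nf_za hza,
    nf_zb' hzb, nf_zb hzb, nf_zz', nf_zz, nf_aa', nf_aa, nf_bb', nf_bb]
  group

end NF


variable {G : Type*} [Group G] {S : Set G}

section Counting

variable {X : Type*} [MulAction G X]

lemma fix_mul {g h : G} {x : X} (hg : g • x = x) (hh : h • x = x) : (g * h) • x = x := by
  rw [mul_smul, hh, hg]

lemma fix_inv {g : G} {x : X} (hg : g • x = x) : g⁻¹ • x = x := by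
  conv_lhs => rw [← hg]
  rw [← mul_smul, inv_mul_cancel, one_smul]

private lemma abs_sub_le_abs_add_abs (A B : ℤ) : |A - B| ≤ |A| + |B| := by
  rw [sub_eq_add_neg]
  exact (abs_add_le _ _).trans (by rw [abs_neg])

set_option maxHeartbeats 1000000 in
/-- Core basepoint/conjugator selection lemma. -/
lemma counting {a b z : G} (hab : a * b = z * (b * a)) (hza : Commute z a) (hzb : Commute z b)
    {x : X} {n : ℕ} (hn : 1 ≤ n)
    (hP : ∀ k : ℤ, k ≠ 0 → |k| ≤ 30 * (n:ℤ)^5 → z ^ k • x ≠ x)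
    (hV : ∀ i t : ℤ, i ≠ 0 → |i| < (n:ℤ) → (z ^ t * a ^ i) • x ≠ x) :
    ∃ α : ℤ, ∀ i j k i' j' k' : ℤ,
      0 ≤ i → i < (n:ℤ) → 0 ≤ j → j < (n:ℤ) → 0 ≤ k → k < (n:ℤ)^2 →
      0 ≤ i' → i' < (n:ℤ) → 0 ≤ j' → j' < (n:ℤ) → 0 ≤ k' → k' < (n:ℤ)^2 →
      (z ^ k * a ^ i * b ^ j) • ((a ^ α : G) • x) = (z ^ k' * a ^ i' * b ^ j') • ((a ^ α : G) • x) →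
      i = i' ∧ j = j' ∧ k = k' := by
  have hN1 : 1 ≤ (n:ℤ) := by exact_mod_cast hn
  set N : ℤ := (n : ℤ) with hNdef
  have hN2 : N^2 ≤ N^5 := pow_le_pow_right₀ hN1 (by norm_num)
  have hN3 : N^3 ≤ N^5 := pow_le_pow_right₀ hN1 (by norm_num)
  have hN0 : 0 ≤ N := by linarith
  -- Step 1 : find a good conjugating exponent α
  have step1 : ∃ α : ℤ, ∀ p q E : ℤ, q ≠ 0 → |p| < N → |q| < N → |E| < 2*N^2 →
      (z ^ (E - α * q) * a ^ p * b ^ q) • x ≠ x := by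
    by_contra hcon
    push_neg at hcon
    choose pf qf Ef hq habs1 habs2 habsE heq using hcon
    set cand : ℕ → ℤ := fun m => (m : ℤ) * (4*N^2+1) with hcand
    set V : Finset (ℤ × ℤ) :=
      (Finset.Icc (-N+1) (N-1)) ×ˢ (Finset.Icc (-N+1) (N-1)) with hV
    have hmaps : ∀ m ∈ Finset.range (4*n^2+1),
        (fun m => (pf (cand m), qf (cand m))) m ∈ V := by
      intro m _
      have h1 := abs_lt.mp (habs1 (cand m))
      have h2 := abs_lt.mp (habs2 (cand m))
      simp only [hV, Finset.mem_product, Finset.mem_Icc]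
      omega
    have hcard : V.card < (Finset.range (4*n^2+1)).card := by
      have h1 : (Finset.Icc (-N+1) (N-1)).card = (2*N-1).toNat := by
        rw [Int.card_Icc]; congr 1; ring
      have h2 : V.card = (2*N-1).toNat * (2*N-1).toNat := by
        rw [hV, Finset.card_product, h1]
      rw [h2, Finset.card_range]
      have h3 : (2*N-1).toNat ≤ 2*n - 1 := by omega
      have h4 : (2*n-1) * (2*n-1) < 4*n^2+1 := by
        zify [show (1:ℕ) ≤ 2*n from by omega]
        nlinarith [hN1]
      calc (2*N-1).toNat * (2*N-1).toNat ≤ (2*n-1)*(2*n-1) := Nat.mul_le_mul h3 h3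
        _ < 4*n^2+1 := h4
    obtain ⟨m, hm, m', hm', hne, hfeq⟩ :=
      Finset.exists_ne_map_eq_of_card_lt_of_maps_to hcard hmaps
    simp only [Prod.mk.injEq] at hfeq
    obtain ⟨hp_eq, hq_eq⟩ := hfeq
    set β := cand m with hβ
    set β' := cand m' with hβ'
    set p := pf β with hp
    set q := qf β with hqd
    set t : ℤ := Ef β - β * q with ht
    set t' : ℤ := Ef β' - β' * q with ht'
    have h1 : (z ^ t * a ^ p * b ^ q) • x = x := heq β
    have h2 : (z ^ t' * a ^ p * b ^ q) • x = x := by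
      have h0 := heq β'
      rw [← hp_eq, ← hq_eq] at h0
      exact h0
    have hgfix : (z ^ (t - t')) • x = x := by
      have hcomp : (z ^ t' * a ^ p * b ^ q)⁻¹ * (z ^ t * a ^ p * b ^ q) = z ^ (t - t') := by
        rw [nf_inv hab hza hzb, nf_mul hab hza hzb,
          show -t' - p*q + t - p * -q = t - t' by ring,
          show -p + p = (0:ℤ) by ring, show -q + q = (0:ℤ) by ring,
          zpow_zero, zpow_zero, mul_one, mul_one]
      rw [← hcomp]
      exact fix_mul (fix_inv h2) h1
    have habsq : |q| < N := habs2 β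
    have habsq1 : 1 ≤ |q| := Int.one_le_abs (hq β)
    have hEb := abs_lt.mp (habsE β)
    have hEb' := abs_lt.mp (habsE β')
    have hmm : |(m:ℤ) - (m':ℤ)| ≤ 4*N^2 := by
      have hm1 : (m:ℤ) ≤ 4*N^2 := by
        have hx1 : m ≤ 4*n^2 := Nat.lt_succ_iff.mp (Finset.mem_range.mp hm)
        have hcast : ((4*n^2 : ℕ) : ℤ) = 4*N^2 := by push_cast; ring
        calc (m:ℤ) ≤ ((4*n^2 : ℕ) : ℤ) := by exact_mod_cast hx1
          _ = 4*N^2 := hcast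
      have hm2 : (m':ℤ) ≤ 4*N^2 := by
        have hx1 : m' ≤ 4*n^2 := Nat.lt_succ_iff.mp (Finset.mem_range.mp hm')
        have hcast : ((4*n^2 : ℕ) : ℤ) = 4*N^2 := by push_cast; ring
        calc (m':ℤ) ≤ ((4*n^2 : ℕ) : ℤ) := by exact_mod_cast hx1
          _ = 4*N^2 := hcast
      rw [abs_sub_le_iff]
      constructor <;> linarith [Int.natCast_nonneg m, Int.natCast_nonneg m']
    have hββ' : β - β' = ((m:ℤ) - m') * (4*N^2+1) := by rw [hβ, hβ', hcand]; ring
    have htt' : t - t' = (Ef β - Ef β') - q * (β - β') := by rw [ht, ht']; ring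
    have habsEE : |Ef β - Ef β'| ≤ 4 * N^2 := by
      rw [abs_sub_le_iff]; constructor <;> linarith
    have h7 : |q * (β - β')| ≤ N * (4*N^2 * (4*N^2+1)) := by
      rw [hββ', abs_mul, abs_mul, abs_of_nonneg (show (0:ℤ) ≤ 4*N^2+1 by positivity)]
      have h8 : |q| ≤ N := le_of_lt habsq
      refine mul_le_mul h8 ?_ (by positivity) hN0
      refine mul_le_mul hmm le_rfl (by positivity) (by positivity)
    have habs_tt : |t - t'| ≤ 30 * N^5 := by
      have h9 : |t - t'| ≤ |Ef β - Ef β'| + |q * (β - β')| := by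
        rw [htt']; exact abs_sub_le_abs_add_abs _ _
      have h10 : N * (4*N^2 * (4*N^2+1)) = 16*N^5 + 4*N^3 := by ring
      linarith [h9, habsEE, h7, hN2, hN3]
    have htt0 : t - t' = 0 := by
      by_contra hne0
      exact hP (t - t') hne0 habs_tt hgfix
    have hEq : q * (β - β') = Ef β - Ef β' := by linarith [htt', htt0]
    have hlow : 4*N^2+1 ≤ |β - β'| := by
      rw [hββ', abs_mul]
      have h11 : 1 ≤ |(m:ℤ) - m'| := by
        refine Int.one_le_abs ?_
        intro h
        exact hne (by exact_mod_cast sub_eq_zero.mp h)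
      have h12 : |4*N^2+1| = 4*N^2+1 := abs_of_nonneg (by positivity)
      calc (4*N^2+1 : ℤ) = 1 * (4*N^2+1) := (one_mul _).symm
        _ ≤ |(m:ℤ) - m'| * (4*N^2+1) := by
              refine mul_le_mul h11 le_rfl (by positivity) (by linarith [abs_nonneg ((m:ℤ) - m')])
        _ = |(m:ℤ) - m'| * |4*N^2+1| := by rw [h12]
    have hhigh : |q * (β - β')| < 4*N^2 := by
      rw [hEq, abs_sub_lt_iff]; constructor <;> linarith
    have hgap : |β - β'| ≤ |q * (β - β')| := by
      rw [abs_mul]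
      calc |β - β'| = 1 * |β - β'| := (one_mul _).symm
        _ ≤ |q| * |β - β'| := mul_le_mul habsq1 le_rfl (abs_nonneg _) (by linarith [abs_nonneg q])
    linarith
  -- Step 2 : α works
  obtain ⟨α, hα⟩ := step1
  refine ⟨α, ?_⟩
  intro i j k i' j' k' hi0 hin hj0 hjn hk0 hkn hi'0 hi'n hj'0 hj'n hk'0 hk'n hcol
  have hprod1 : (i - i') * j' ≤ (N-1)*(N-1) := by
    calc (i - i') * j' ≤ (N-1) * j' :=
          mul_le_mul_of_nonneg_right (by linarith) (by linarith)
      _ ≤ (N-1)*(N-1) := mul_le_mul_of_nonneg_left (by linarith) (by linarith)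
  have hprod2 : -((N-1)*(N-1)) ≤ (i - i') * j' := by
    have : (-(N-1)) * j' ≤ (i - i') * j' :=
      mul_le_mul_of_nonneg_right (by linarith) (by linarith)
    have h2 : (-(N-1)) * j' ≥ (-(N-1)) * (N-1) := by
      rcases le_or_gt j' (N-1) with h | h
      · nlinarith
      · nlinarith
    nlinarith
  have hfix : (z ^ ((k - k' + (i - i') * j') - α * (j - j')) * a ^ (i - i') * b ^ (j - j')) • x
      = x := by
    have e1 : ((z ^ k * a ^ i * b ^ j) * a ^ α) • x = ((z ^ k' * a ^ i' * b ^ j') * a ^ α) • x := by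
      simp only [mul_smul]
      simpa only [mul_smul] using hcol
    have e2 : (((z ^ k' * a ^ i' * b ^ j') * a ^ α)⁻¹ * ((z ^ k * a ^ i * b ^ j) * a ^ α)) • x
        = x := by
      rw [mul_smul, e1, ← mul_smul, inv_mul_cancel, one_smul]
    have e3 : ((z ^ k' * a ^ i' * b ^ j') * a ^ α)⁻¹ * ((z ^ k * a ^ i * b ^ j) * a ^ α)
        = a ^ (-α) * (((z ^ k' * a ^ i' * b ^ j')⁻¹ * (z ^ k * a ^ i * b ^ j)) * a ^ α) := by
      rw [zpow_neg, mul_inv_rev]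
      simp only [mul_assoc]
    have e4 : (z ^ k' * a ^ i' * b ^ j')⁻¹ * (z ^ k * a ^ i * b ^ j)
        = z ^ (k - k' + (i - i') * j') * a ^ (i - i') * b ^ (j - j') := by
      rw [nf_inv hab hza hzb, nf_mul hab hza hzb,
        show -k' - i'*j' + k - i * -j' = k - k' + (i - i') * j' by ring,
        show -i' + i = i - i' by ring, show -j' + j = j - j' by ring]
    have e5 := e2
    rw [e3, e4, nf_conj_a hab hza hzb] at e5
    exact e5
  by_cases hj : j - j' = 0
  · by_cases hi : i - i' = 0
    · rw [hi, hj] at hfix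
      simp only [zpow_zero, mul_one, zero_mul, mul_zero, sub_zero, add_zero] at hfix
      have hk : k - k' = 0 := by
        by_contra hkne
        refine hP (k - k') hkne ?_ hfix
        rw [abs_le]
        constructor <;> nlinarith
      refine ⟨by linarith, by linarith, by linarith⟩
    · exfalso
      rw [hj] at hfix
      simp only [mul_zero, sub_zero, zpow_zero, mul_one] at hfix
      refine hV (i - i') (k - k' + (i-i')*j') hi ?_ hfix
      rw [abs_lt]; constructor <;> linarith
  · exfalso
    refine hα (i - i') (j - j') (k - k' + (i - i')*j') hj ?_ ?_ ?_ hfix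
    · rw [abs_lt]; constructor <;> linarith
    · rw [abs_lt]; constructor <;> linarith
    · rw [abs_lt]
      constructor <;> nlinarith

end Counting

section Assembly

variable {X : Type*} [MulAction G X]

/-- commutator power formula -/
lemma comm_formula {a b z : G} (hab : a * b = z * (b * a)) (hza : Commute z a)
    (hzb : Commute z b) (p q : ℤ) :
    z ^ (p*q) = a ^ p * b ^ q * a ^ (-p) * b ^ (-q) := by
  have h := ex_bq hab hza hzb p q
  rw [h]; group

lemma comm_formula_nat {a b z : G} (hab : a * b = z * (b * a)) (hza : Commute z a)
    (hzb : Commute z b) (P Q : ℕ) :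
    z ^ (P*Q) = a ^ P * b ^ Q * (a ^ P)⁻¹ * (b ^ Q)⁻¹ := by
  have h := comm_formula hab hza hzb (P:ℤ) (Q:ℤ)
  rw [show ((P:ℤ) * (Q:ℤ)) = ((P*Q : ℕ) : ℤ) by push_cast; ring] at h
  rw [zpow_natCast, zpow_natCast, zpow_natCast, zpow_neg, zpow_neg, zpow_natCast,
    zpow_natCast] at h
  exact h

lemma fix_zpow {g : G} {x : X} (hg : g • x = x) (t : ℤ) : g ^ t • x = x := by
  induction t using Int.induction_on with
  | zero => simp
  | succ t ih => rw [zpow_add_one, mul_smul, hg]; exact ih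
  | pred t ih => rw [zpow_sub_one, mul_smul, fix_inv hg]; exact ih

lemma fix_pow {g : G} {x : X} (hg : g • x = x) (t : ℕ) : g ^ t • x = x := by
  have := fix_zpow hg (t : ℤ)
  rwa [zpow_natCast] at this

/-- there is a point on which small powers of `z` act freely -/
lemma exists_free_point [FaithfulSMul G X] {z : G} (hinf : ¬ IsOfFinOrder z) (B : ℕ) :
    ∃ x : X, ∀ k : ℤ, k ≠ 0 → |k| ≤ (B:ℤ) → z ^ k • x ≠ x := by
  by_contra hcon
  push_neg at hcon
  have hfixall : ∀ x : X, z ^ (Nat.factorial B) • x = x := by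
    intro x
    obtain ⟨k, hk0, hkB, hfix⟩ := hcon x
    have hfixnat : z ^ (k.natAbs) • x = x := by
      rcases le_or_gt 0 k with h | h
      · rw [← zpow_natCast, Int.natAbs_of_nonneg h]; exact hfix
      · have h1 : z ^ (-k) • x = x := by
          rw [zpow_neg]; exact fix_inv hfix
        rw [← zpow_natCast, show ((k.natAbs : ℤ)) = -k by omega]
        exact h1
    have hdvd : k.natAbs ∣ Nat.factorial B := by
      refine Nat.dvd_factorial ?_ ?_
      · omega
      · have h2 : (k.natAbs : ℤ) ≤ (B:ℤ) := by rwa [Int.abs_eq_natAbs] at hkB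
        exact_mod_cast h2
    obtain ⟨c, hc⟩ := hdvd
    rw [hc, pow_mul]
    exact fix_pow hfixnat c
  have : z ^ (Nat.factorial B) = 1 := by
    refine eq_of_smul_eq_smul (α := X) (fun x => ?_)
    rw [hfixall x, one_smul]
  exact hinf (isOfFinOrder_iff_pow_eq_one.mpr ⟨Nat.factorial B, Nat.factorial_pos B, this⟩)

/-- dichotomy: either no small `a`-horizontal element fixes `x`,
or no small `b`-horizontal element fixes `x`. -/
lemma dichotomy {a b z : G} (hab : a * b = z * (b * a)) (hza : Commute z a) (hzb : Commute z b)
    {x : X} {n : ℕ} (hn : 1 ≤ n)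
    (hP : ∀ k : ℤ, k ≠ 0 → |k| ≤ 30 * (n:ℤ)^5 → z ^ k • x ≠ x) :
    (∀ i t : ℤ, i ≠ 0 → |i| < (n:ℤ) → (z ^ t * a ^ i) • x ≠ x) ∨
    (∀ i t : ℤ, i ≠ 0 → |i| < (n:ℤ) → ((z⁻¹) ^ t * b ^ i) • x ≠ x) := by
  have hN1 : 1 ≤ (n:ℤ) := by exact_mod_cast hn
  by_contra hcon
  push_neg at hcon
  obtain ⟨⟨p, t, hp0, hpN, hfix1⟩, ⟨j, s, hj0, hjN, hfix2⟩⟩ := hcon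
  have hfix2' : (z ^ (-s) * b ^ j) • x = x := by
    rwa [inv_zpow, ← zpow_neg] at hfix2
  -- commutator of the two fixing elements is z^(p*j)
  have hcalc : ((z ^ t * a ^ p) * (z ^ (-s) * b ^ j)) * ((z ^ t * a ^ p)⁻¹ *
      ((z ^ (-s) * b ^ j))⁻¹) = z ^ (p*j) := by
    have r1 : z ^ t * a ^ p = z ^ t * a ^ p * b ^ (0:ℤ) := by simp
    have r2 : z ^ (-s) * b ^ j = z ^ (-s) * a ^ (0:ℤ) * b ^ j := by simp
    rw [r1, r2]
    rw [nf_inv hab hza hzb, nf_inv hab hza hzb, nf_mul hab hza hzb, nf_mul hab hza hzb,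
      nf_mul hab hza hzb]
    group
  have hfixc : (z ^ (p*j)) • x = x := by
    rw [← hcalc]
    exact fix_mul (fix_mul hfix1 hfix2') (fix_mul (fix_inv hfix1) (fix_inv hfix2'))
  refine hP (p*j) (mul_ne_zero hp0 hj0) ?_ hfixc
  have h1 : |p*j| ≤ (n:ℤ)^2 := by
    rw [abs_mul]
    calc |p| * |j| ≤ (n:ℤ) * (n:ℤ) := by
          refine mul_le_mul (le_of_lt hpN) (le_of_lt hjN) (abs_nonneg _) (by linarith)
      _ = (n:ℤ)^2 := by ring
  have h2 : ((n:ℤ))^2 ≤ 30*(n:ℤ)^5 := by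
    nlinarith [pow_le_pow_right₀ hN1 (show 2 ≤ 5 by norm_num)]
  linarith

/-- normal forms with small exponents lie in a linear-size ball -/
lemma nf_mem_ball {a b z : G} (hab : a * b = z * (b * a)) (hza : Commute z a)
    (hzb : Commute z b) (hsym : ∀ s ∈ S, s⁻¹ ∈ S) {L : ℕ} (hL : 1 ≤ L)
    (haS : a ∈ wordBall S L) (hbS : b ∈ wordBall S L) {n i j k : ℕ} (hn : 1 ≤ n)
    (hi : i < n) (hj : j < n) (hk : k < n*n) :
    (z ^ (k:ℤ) * a ^ (i:ℤ) * b ^ (j:ℤ)) ∈ wordBall S (10*L*n) := by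
  rw [zpow_natCast, zpow_natCast, zpow_natCast]
  set P := n*L with hP
  have hq : k / n < n := Nat.div_lt_iff_lt_mul (by omega) |>.mpr hk
  have hr : k % n < n := Nat.mod_lt _ (by omega)
  set q := k / n with hqd
  set r := k % n with hrd
  have hksplit : k = q*n + r := (Nat.div_add_mod' k n).symm
  -- membership helpers: x^m ∈ ball P for m ≤ n
  have memP : ∀ (g : G), g ∈ wordBall S L → ∀ m : ℕ, m ≤ n → g ^ m ∈ wordBall S P := by
    intro g hg m hm
    refine wordBall_mono ?_ (pow_mem_wordBall hg m)
    calc m * L ≤ n * L := Nat.mul_le_mul_right L hm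
      _ = P := hP.symm
  have memPinv : ∀ (g : G), g ∈ wordBall S L → ∀ m : ℕ, m ≤ n → (g ^ m)⁻¹ ∈ wordBall S P := by
    intro g hg m hm
    exact inv_mem_wordBall hsym (memP g hg m hm)
  have hzqn : (z : G) ^ (q*n) ∈ wordBall S (P + P + P + P) := by
    rw [comm_formula_nat hab hza hzb q n]
    exact mul_mem_wordBall (mul_mem_wordBall (mul_mem_wordBall
      (memP a haS q (le_of_lt hq)) (memP b hbS n le_rfl))
      (memPinv a haS q (le_of_lt hq))) (memPinv b hbS n le_rfl)
  have hzr : (z : G) ^ r ∈ wordBall S (P + P + P + P) := by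
    have h1 : (z:G) ^ r = z ^ (1*r) := by rw [one_mul]
    rw [h1, comm_formula_nat hab hza hzb 1 r]
    exact mul_mem_wordBall (mul_mem_wordBall (mul_mem_wordBall
      (memP a haS 1 hn) (memP b hbS r (le_of_lt hr)))
      (memPinv a haS 1 hn)) (memPinv b hbS r (le_of_lt hr))
  have hzk : (z : G) ^ k ∈ wordBall S (P+P+P+P + (P+P+P+P)) := by
    rw [hksplit, pow_add]
    exact mul_mem_wordBall hzqn hzr
  have hfull : (z ^ k * a ^ i * b ^ j : G) ∈ wordBall S ((P+P+P+P+(P+P+P+P)) + P + P) :=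
    mul_mem_wordBall (mul_mem_wordBall hzk (memP a haS i (le_of_lt hi)))
      (memP b hbS j (le_of_lt hj))
  refine wordBall_mono ?_ hfull
  have h10 : 10*L*n = 10*P := by rw [hP]; ring
  omega

end Assembly

section Growth

variable {X : Type*} [MulAction G X]

lemma key_count {a b z : G} (hab : a * b = z * (b * a)) (hza : Commute z a) (hzb : Commute z b)
    {x : X} {n : ℕ} (hn : 1 ≤ n)
    (hP : ∀ k : ℤ, k ≠ 0 → |k| ≤ 30 * (n:ℤ)^5 → z ^ k • x ≠ x)
    (hV : ∀ i t : ℤ, i ≠ 0 → |i| < (n:ℤ) → (z ^ t * a ^ i) • x ≠ x)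
    (hsym : ∀ s ∈ S, s⁻¹ ∈ S) (hfin : S.Finite) {L : ℕ} (hL : 1 ≤ L)
    (haS : a ∈ wordBall S L) (hbS : b ∈ wordBall S L) :
    n^4 ≤ actionGrowth G X S (10*L*n) := by
  classical
  obtain ⟨α, hinj⟩ := counting hab hza hzb hn hP hV
  set x₂ : X := (a ^ α : G) • x with hx2
  set m := 10*L*n with hm
  set F : Finset (ℕ × ℕ × ℕ) := (Finset.range n) ×ˢ (Finset.range n) ×ˢ (Finset.range (n*n))
    with hF
  set ψ : ℕ × ℕ × ℕ → X := fun t => (z ^ (t.2.2:ℤ) * a ^ (t.1:ℤ) * b ^ (t.2.1:ℤ)) • x₂ with hψ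
  have hinjF : Set.InjOn ψ F := by
    rintro ⟨u1, u2, u3⟩ hu ⟨v1, v2, v3⟩ hv heq
    simp only [hF, Finset.coe_product, Set.mem_prod, Finset.mem_coe, Finset.mem_range] at hu hv
    obtain ⟨hu1, hu2, hu3⟩ := hu
    obtain ⟨hv1, hv2, hv3⟩ := hv
    simp only [hψ] at heq
    have hres := hinj (u1:ℤ) (u2:ℤ) (u3:ℤ) (v1:ℤ) (v2:ℤ) (v3:ℤ)
      (Int.natCast_nonneg _) (by exact_mod_cast hu1)
      (Int.natCast_nonneg _) (by exact_mod_cast hu2)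
      (Int.natCast_nonneg _) (by rw [pow_two]; exact_mod_cast hu3)
      (Int.natCast_nonneg _) (by exact_mod_cast hv1)
      (Int.natCast_nonneg _) (by exact_mod_cast hv2)
      (Int.natCast_nonneg _) (by rw [pow_two]; exact_mod_cast hv3)
      heq
    obtain ⟨h1, h2, h3⟩ := hres
    have e1 : u1 = v1 := by exact_mod_cast h1
    have e2 : u2 = v2 := by exact_mod_cast h2
    have e3 : u3 = v3 := by exact_mod_cast h3
    simp [e1, e2, e3]
  have hcard : (F.image ψ).card = n^4 := by
    rw [Finset.card_image_of_injOn hinjF]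
    simp only [hF, Finset.card_product, Finset.card_range]
    ring
  have hsub : ↑(F.image ψ) ⊆ (fun g : G => g • x₂) '' wordBall S m := by
    intro y hy
    simp only [Finset.coe_image, Set.mem_image, Finset.mem_coe] at hy
    obtain ⟨t, ht, rfl⟩ := hy
    obtain ⟨t1, t2, t3⟩ := t
    simp only [hF, Finset.mem_product, Finset.mem_range] at ht
    obtain ⟨ht1, ht2, ht3⟩ := ht
    refine ⟨z ^ (t3:ℤ) * a ^ (t1:ℤ) * b ^ (t2:ℤ), ?_, rfl⟩
    rw [hm]
    exact nf_mem_ball hab hza hzb hsym hL haS hbS hn ht1 ht2 ht3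
  have hfinb : ((fun g : G => g • x₂) '' wordBall S m).Finite :=
    (wordBall_finite hfin m).image _
  have h1 : n^4 ≤ ((fun g : G => g • x₂) '' wordBall S m).ncard := by
    calc n^4 = (F.image ψ).card := hcard.symm
      _ = (↑(F.image ψ) : Set X).ncard := (Set.ncard_coe_finset _).symm
      _ ≤ _ := Set.ncard_le_ncard hsub hfinb
  have hbdd : BddAbove (Set.range fun y : X =>
      ((fun g : G => g • y) '' wordBall S m).ncard) := by
    refine ⟨(wordBall S m).ncard, ?_⟩
    rintro val ⟨y, rfl⟩
    exact Set.ncard_image_le (wordBall_finite hfin m)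
  calc n^4 ≤ ((fun g : G => g • x₂) '' wordBall S m).ncard := h1
    _ ≤ actionGrowth G X S m := le_ciSup hbdd x₂

lemma growth_lower_bound [FaithfulSMul G X]
    {a b z : G} (hab : a * b = z * (b * a)) (hza : Commute z a) (hzb : Commute z b)
    (hinf : ¬ IsOfFinOrder z)
    (hsym : ∀ s ∈ S, s⁻¹ ∈ S) (hfin : S.Finite) {L : ℕ} (hL : 1 ≤ L)
    (haS : a ∈ wordBall S L) (hbS : b ∈ wordBall S L)
    {n : ℕ} (hn : 1 ≤ n) : n^4 ≤ actionGrowth G X S (10*L*n) := by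
  obtain ⟨x, hPx⟩ := exists_free_point (X := X) hinf (30*n^5)
  have hP : ∀ k : ℤ, k ≠ 0 → |k| ≤ 30 * (n:ℤ)^5 → z ^ k • x ≠ x := by
    intro k hk habs
    refine hPx k hk ?_
    rw [show ((30*n^5 : ℕ) : ℤ) = 30*(n:ℤ)^5 by push_cast; ring]
    exact habs
  rcases dichotomy hab hza hzb hn hP with hVa | hVb
  · exact key_count hab hza hzb hn hP hVa hsym hfin hL haS hbS
  · have hab' : b * a = z⁻¹ * (a * b) := by rw [hab]; group
    have hP' : ∀ k : ℤ, k ≠ 0 → |k| ≤ 30 * (n:ℤ)^5 → (z⁻¹) ^ k • x ≠ x := by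
      intro k hk habs heq
      refine hP (-k) (by omega) (by rwa [abs_neg]) ?_
      rwa [inv_zpow, ← zpow_neg] at heq
    exact key_count hab' hzb.inv_left hza.inv_left hn hP' hVb hsym hfin hL hbS haS

lemma exists_ball_mem (hgen : Subgroup.closure S = ⊤) (hsym : ∀ s ∈ S, s⁻¹ ∈ S) (g : G) :
    ∃ L : ℕ, g ∈ wordBall S L := by
  have hg : g ∈ Subgroup.closure S := by rw [hgen]; trivial
  rw [← Subgroup.mem_toSubmonoid, Subgroup.closure_toSubmonoid] at hg
  obtain ⟨l, hl, hprod⟩ := Submonoid.exists_list_of_mem_closure hg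
  refine ⟨l.length, l, le_rfl, ?_, hprod⟩
  intro s hs
  rcases hl s hs with h | h
  · exact h
  · have := hsym s⁻¹ h
    rwa [inv_inv] at this

/-- Main Part-2 lemma : a witness triple gives the `n^4` gap inequality. -/
lemma gap_of_witness [FaithfulSMul G X]
    {a b z : G} (hab : a * b = z * (b * a)) (hza : Commute z a) (hzb : Commute z b)
    (hinf : ¬ IsOfFinOrder z)
    (hfin : S.Finite) (hsym : ∀ s ∈ S, s⁻¹ ∈ S) (hgen : Subgroup.closure S = ⊤) :
    ∃ C : ℕ, 1 ≤ C ∧ ∀ n : ℕ, 1 ≤ n →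
      ((n:ℝ)) ^ 4 ≤ (C : ℝ) * (actionGrowth G X S (C * n) : ℝ) := by
  obtain ⟨La, haS⟩ := exists_ball_mem hgen hsym a
  obtain ⟨Lb, hbS⟩ := exists_ball_mem hgen hsym b
  set L := max (max La Lb) 1 with hLdef
  have hL : 1 ≤ L := le_max_right _ _
  have haS' : a ∈ wordBall S L := wordBall_mono (le_trans (le_max_left _ _) (le_max_left _ _)) haS
  have hbS' : b ∈ wordBall S L := wordBall_mono (le_trans (le_max_right _ _) (le_max_left _ _)) hbS
  refine ⟨10*L, by omega, ?_⟩
  intro n hn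
  have hmain : n^4 ≤ actionGrowth G X S (10*L*n) :=
    growth_lower_bound hab hza hzb hinf hsym hfin hL haS' hbS' hn
  have hcast : ((n:ℝ))^4 ≤ (actionGrowth G X S (10*L*n) : ℝ) := by
    exact_mod_cast hmain
  have hge0 : (0:ℝ) ≤ (actionGrowth G X S (10*L*n) : ℝ) := Nat.cast_nonneg _
  calc ((n:ℝ))^4 ≤ (actionGrowth G X S (10*L*n) : ℝ) := hcast
    _ ≤ (10*L : ℕ) * (actionGrowth G X S (10*L*n) : ℝ) := by
          refine le_mul_of_one_le_left hge0 ?_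
          exact_mod_cast by omega
    _ = (10*L : ℕ) * (actionGrowth G X S ((10*L) * n) : ℝ) := by rw [mul_assoc]

end Growth

section PartOne

/-- closure of finitely many central torsion elements is finite -/
lemma closure_finite_of_central_torsion (s : Finset G)
    (hcen : ∀ c ∈ s, c ∈ Subgroup.center G) (htor : ∀ c ∈ s, IsOfFinOrder c) :
    ((Subgroup.closure (s : Set G) : Subgroup G) : Set G).Finite := by
  classical
  induction s using Finset.induction_on with
  | empty => simp [Subgroup.closure_empty]
  | @insert c s hc ih =>
      have hcc : c ∈ Subgroup.center G := hcen c (Finset.mem_insert_self _ _)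
      haveI hnorm : (Subgroup.zpowers c).Normal := by
        constructor
        intro m hm g
        obtain ⟨k, rfl⟩ := Subgroup.mem_zpowers_iff.mp hm
        have hck : (c:G) ^ k ∈ Subgroup.center G := Subgroup.zpow_mem _ hcc k
        have : g * c ^ k * g⁻¹ = c ^ k := by
          rw [Subgroup.mem_center_iff.mp hck g]; group
        rw [this]
        exact Subgroup.zpow_mem _ (Subgroup.mem_zpowers c) k
      have hsub_eq : Subgroup.closure ((insert c s : Finset G) : Set G)
          = Subgroup.zpowers c ⊔ Subgroup.closure (s : Set G) := by
        rw [Finset.coe_insert, Set.insert_eq, Subgroup.closure_union, Subgroup.zpowers_eq_closure]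
      rw [hsub_eq, Subgroup.normal_mul]
      refine Set.Finite.mul ?_ ?_
      · exact finite_zpowers.mpr (htor c (Finset.mem_insert_self _ _))
      · exact ih (fun d hd => hcen d (Finset.mem_insert_of_mem hd))
          (fun d hd => htor d (Finset.mem_insert_of_mem hd))

/-- transfer of virtual abelianness along a finite-index subgroup -/
lemma va_of_subgroup {A : Subgroup G} (hA : A.FiniteIndex) (hva : VirtuallyAbelian ↥A) :
    VirtuallyAbelian G := by
  obtain ⟨B, hBfi, hBcomm⟩ := hva
  refine ⟨B.map A.subtype, ⟨?_⟩, ?_⟩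
  · rw [Subgroup.index_map_subtype]
    exact mul_ne_zero hBfi.index_ne_zero hA.index_ne_zero
  · rintro ⟨u, hu⟩ ⟨v, hv⟩
    obtain ⟨ub, hub, hueq⟩ := Subgroup.mem_map.mp hu
    obtain ⟨vb, hvb, hveq⟩ := Subgroup.mem_map.mp hv
    have h := hBcomm ⟨ub, hub⟩ ⟨vb, hvb⟩
    have h2 : (ub : G) * vb = (vb : G) * ub := by
      have := congrArg (fun w : ↥B => ((w : ↥A) : G)) h
      simpa using this
    apply Subtype.ext
    simp only [Subgroup.coe_mul]
    rw [← hueq, ← hveq]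
    exact h2

/-- transfer of a witness triple from a subgroup -/
lemma witness_of_subgroup {A : Subgroup G}
    (h : ∃ a b za : ↥A, a * b = za * (b * a) ∧ Commute za a ∧ Commute za b ∧
      ¬ IsOfFinOrder za) :
    ∃ a b za : G, a * b = za * (b * a) ∧ Commute za a ∧ Commute za b ∧ ¬ IsOfFinOrder za := by
  obtain ⟨a, b, za, h1, h2, h3, h4⟩ := h
  refine ⟨a, b, za, ?_, ?_, ?_, ?_⟩
  · have := congrArg (fun w : ↥A => (w : G)) h1
    simpa using this
  · have := congrArg (fun w : ↥A => (w : G)) h2.eq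
    simpa [Commute, SemiconjBy] using this
  · have := congrArg (fun w : ↥A => (w : G)) h3.eq
    simpa [Commute, SemiconjBy] using this
  · intro hfin
    obtain ⟨k, hk0, hk1⟩ := isOfFinOrder_iff_pow_eq_one.mp hfin
    refine h4 (isOfFinOrder_iff_pow_eq_one.mpr ⟨k, hk0, ?_⟩)
    apply Subtype.ext
    simpa using hk1

/-- the finitely generated, all-commutators-central case -/
lemma class2_case (A : Type*) [Group A] [Group.FG A]
    (hcen : ∀ x y : A, ⁅x, y⁆ ∈ Subgroup.center A) :
    VirtuallyAbelian A ∨ ∃ a b za : A, a * b = za * (b * a) ∧ Commute za a ∧ Commute za b ∧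
      ¬ IsOfFinOrder za := by
  classical
  by_cases hex : ∃ x y : A, ¬ IsOfFinOrder ⁅x, y⁆
  · right
    obtain ⟨x, y, h⟩ := hex
    refine ⟨x, y, ⁅x, y⁆, by rw [commutatorElement_def]; group, ?_, ?_, h⟩
    · exact (Subgroup.mem_center_iff.mp (hcen x y) x).symm
    · exact (Subgroup.mem_center_iff.mp (hcen x y) y).symm
  · push_neg at hex
    left
    obtain ⟨T, hT⟩ := Group.FG.out (G := A)
    -- for each g, the map x ↦ ⁅g, x⁆ is a homomorphism with finite image
    have hhom : ∀ g : A, ∀ x y : A, ⁅g, x*y⁆ = ⁅g, x⁆ * ⁅g, y⁆ := by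
      intro g x y
      have hid : ⁅g, x*y⁆ = ⁅g, x⁆ * (x * ⁅g, y⁆ * x⁻¹) := by
        simp only [commutatorElement_def]
        group
      have hc : x * ⁅g, y⁆ * x⁻¹ = ⁅g, y⁆ := by
        rw [Subgroup.mem_center_iff.mp (hcen g y) x]; group
      rw [hid, hc]
    set φ : A → A →* A := fun g => MonoidHom.mk' (fun x => ⁅g, x⁆) (hhom g) with hφ
    have hker_fi : ∀ g : A, (φ g).ker.FiniteIndex := by
      intro g
      have hrange : ((φ g).range : Set A).Finite := by
        have h1 : (φ g).range = Subgroup.closure ((φ g) '' (T : Set A)) := by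
          rw [MonoidHom.range_eq_map, ← hT, MonoidHom.map_closure]
        have h2 : (φ g) '' (T : Set A) = ((T.image (φ g) : Finset A) : Set A) := by
          simp [Finset.coe_image]
        rw [h1, h2]
        refine closure_finite_of_central_torsion _ ?_ ?_
        · intro d hd
          obtain ⟨t, ht, rfl⟩ := Finset.mem_image.mp hd
          exact hcen g t
        · intro d hd
          obtain ⟨t, ht, rfl⟩ := Finset.mem_image.mp hd
          exact hex g t
      constructor
      rw [Subgroup.index_ker]
      haveI : Finite ((φ g).range) := hrange.to_subtype
      exact Nat.card_pos.ne'
    -- the intersection of the kernels over generators is central and of finite index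
    set K : Subgroup A := ⨅ g : (T : Set A), (φ g).ker with hK
    haveI : Finite (T : Set A) := T.finite_toSet.to_subtype
    haveI hKfi : K.FiniteIndex := Subgroup.finiteIndex_iInf (fun g => hker_fi g)
    refine ⟨K, hKfi, ?_⟩
    have hKcen : ∀ u : A, u ∈ K → u ∈ Subgroup.center A := by
      intro u hu
      rw [Subgroup.mem_center_iff]
      intro g
      have hgen : g ∈ Subgroup.closure (T : Set A) := by rw [hT]; trivial
      have hcomm : Commute g u := by
        induction hgen using Subgroup.closure_induction with
        | mem w hw =>
            have hker : u ∈ (φ w).ker := Subgroup.mem_iInf.mp hu ⟨w, hw⟩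
            have : ⁅w, u⁆ = 1 := hker
            exact commutatorElement_eq_one_iff_commute.mp this
        | one => exact Commute.one_left u
        | mul w₁ w₂ hw₁ hw₂ ih1 ih2 => exact ih1.mul_left ih2
        | inv w hw ih => exact ih.inv_left
      exact hcomm.eq
    rintro ⟨u, hu⟩ ⟨v, hv⟩
    apply Subtype.ext
    simp only [Subgroup.coe_mul]
    exact (Subgroup.mem_center_iff.mp (hKcen u hu) v).symm

end PartOne

section Induction

lemma ex_pow_nat {a b z : G} (hab : a * b = z * (b * a)) (hza : Commute z a)
    (hzb : Commute z b) (P Q : ℕ) :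
    a ^ P * b ^ Q = z ^ (P*Q) * (b ^ Q * a ^ P) := by
  have hx := ex_bq hab hza hzb (P:ℤ) (Q:ℤ)
  rw [show ((P:ℤ) * (Q:ℤ)) = ((P*Q : ℕ):ℤ) by push_cast; ring] at hx
  rw [zpow_natCast, zpow_natCast, zpow_natCast] at hx
  exact hx

universe u

lemma nilpotent_core : ∀ (c : ℕ) (N : Type u) [Group N] [Group.FG N] [Group.IsNilpotent N],
    Group.nilpotencyClass N ≤ c →
    VirtuallyAbelian N ∨ ∃ a b za : N, a * b = za * (b * a) ∧ Commute za a ∧ Commute za b ∧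
      ¬ IsOfFinOrder za := by
  intro c
  induction c with
  | zero =>
      intro N _ _ _ hc
      left
      haveI : Subsingleton N := nilpotencyClass_zero_iff_subsingleton.mp (Nat.le_zero.mp hc)
      exact ⟨⊤, inferInstance, fun _ _ => Subsingleton.elim _ _⟩
  | succ c IH =>
      intro N _ _ _ hc
      set π := QuotientGroup.mk' (Subgroup.center N) with hπdef
      have hsurj : Function.Surjective π := QuotientGroup.mk'_surjective _
      haveI : Group.FG (N ⧸ Subgroup.center N) := Group.fg_of_surjective hsurj
      have hclassQ : Group.nilpotencyClass (N ⧸ Subgroup.center N) ≤ c := by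
        rw [nilpotencyClass_quotient_center]; omega
      rcases IH (N ⧸ Subgroup.center N) hclassQ with hva | hwit
      · -- quotient virtually abelian
        obtain ⟨Abar, hAbarfi, hAbarcomm⟩ := hva
        set A := Abar.comap π with hA
        haveI hAfi : A.FiniteIndex := by
          constructor
          rw [hA, Subgroup.index_comap_of_surjective _ hsurj]
          exact hAbarfi.index_ne_zero
        haveI : Group.FG ↥A := Subgroup.fg_of_index_ne_zero A
        have hcenA : ∀ x y : ↥A, ⁅x, y⁆ ∈ Subgroup.center ↥A := by
          intro x y
          have hx : π (x : N) ∈ Abar := x.2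
          have hy : π (y : N) ∈ Abar := y.2
          have hq : π (x:N) * π (y:N) = π (y:N) * π (x:N) := by
            have hcc := hAbarcomm ⟨π x, hx⟩ ⟨π y, hy⟩
            simpa [Subtype.ext_iff] using hcc
          have hc0 : ⁅(x:N), (y:N)⁆ ∈ Subgroup.center N := by
            have hπc : π ⁅(x:N), (y:N)⁆ = 1 := by
              rw [map_commutatorElement]
              exact commutatorElement_eq_one_iff_commute.mpr hq
            have hker : ⁅(x:N),(y:N)⁆ ∈ (QuotientGroup.mk' (Subgroup.center N)).ker := by
              rw [MonoidHom.mem_ker]; exact hπc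
            rwa [QuotientGroup.ker_mk'] at hker
          rw [Subgroup.mem_center_iff]
          intro w
          apply Subtype.ext
          have hcoe : ((⁅x, y⁆ : ↥A) : N) = ⁅(x:N), (y:N)⁆ := rfl
          simp only [Subgroup.coe_mul, hcoe]
          exact Subgroup.mem_center_iff.mp hc0 (w : N)
        rcases class2_case ↥A hcenA with hvaA | hwitA
        · exact Or.inl (va_of_subgroup hAfi hvaA)
        · exact Or.inr (witness_of_subgroup hwitA)
      · -- witness in the quotient: lift it
        obtain ⟨aQ, bQ, zQ, hab', hza', hzb', hinf'⟩ := hwit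
        obtain ⟨a, ha⟩ := hsurj aQ
        obtain ⟨b, hb⟩ := hsurj bQ
        set z : N := (a*b) * (b*a)⁻¹ with hz
        have hπz : π z = zQ := by
          rw [hz]
          simp only [map_mul, map_inv]
          rw [ha, hb, hab']
          group
        set g : N := (z*a) * (a*z)⁻¹ with hg
        set h : N := (z*b) * (b*z)⁻¹ with hh
        have hgc : g ∈ Subgroup.center N := by
          have hπg : π g = 1 := by
            rw [hg]
            simp only [map_mul, map_inv]
            rw [hπz, ha, hza'.eq]
            group
          have hker : g ∈ (QuotientGroup.mk' (Subgroup.center N)).ker := by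
            rw [MonoidHom.mem_ker]; exact hπg
          rwa [QuotientGroup.ker_mk'] at hker
        have hhc : h ∈ Subgroup.center N := by
          have hπh : π h = 1 := by
            rw [hh]
            simp only [map_mul, map_inv]
            rw [hπz, hb, hzb'.eq]
            group
          have hker : h ∈ (QuotientGroup.mk' (Subgroup.center N)).ker := by
            rw [MonoidHom.mem_ker]; exact hπh
          rwa [QuotientGroup.ker_mk'] at hker
        have hzaN : z * a = g * (a * z) := by rw [hg]; group
        have hzbN : z * b = h * (b * z) := by rw [hh]; group
        have habN : a * b = z * (b * a) := by rw [hz]; group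
        by_cases hgfin : IsOfFinOrder g
        · by_cases hhfin : IsOfFinOrder h
          · -- both torsion : power trick
            set e := Nat.lcm (orderOf g) (orderOf h) with he
            have hepos : 0 < e := Nat.lcm_pos hgfin.orderOf_pos hhfin.orderOf_pos
            have hge : g ^ e = 1 := orderOf_dvd_iff_pow_eq_one.mp (Nat.dvd_lcm_left _ _)
            have hhe : h ^ e = 1 := orderOf_dvd_iff_pow_eq_one.mp (Nat.dvd_lcm_right _ _)
            have hgz : Commute g z := (Subgroup.mem_center_iff.mp hgc z).symm
            have hga : Commute g a := (Subgroup.mem_center_iff.mp hgc a).symm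
            have hhz : Commute h z := (Subgroup.mem_center_iff.mp hhc z).symm
            have hhb : Commute h b := (Subgroup.mem_center_iff.mp hhc b).symm
            have hcz_a : Commute (z ^ (e*e)) (a ^ e) := by
              have hx := ex_pow_nat hzaN hgz hga (e*e) e
              have hgpow : g ^ (e*e*e) = 1 := by
                obtain ⟨k, hk⟩ : e ∣ e*e*e := ⟨e*e, by ring⟩
                rw [hk, pow_mul, hge, one_pow]
              rw [hgpow, one_mul] at hx
              exact hx
            have hcz_b : Commute (z ^ (e*e)) (b ^ e) := by
              have hx := ex_pow_nat hzbN hhz hhb (e*e) e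
              have hhpow : h ^ (e*e*e) = 1 := by
                obtain ⟨k, hk⟩ : e ∣ e*e*e := ⟨e*e, by ring⟩
                rw [hk, pow_mul, hhe, one_pow]
              rw [hhpow, one_mul] at hx
              exact hx
            set u : N := (a^e * b^e) * (b^e * a^e)⁻¹ with hu
            have habe : a^e * b^e = u * (b^e * a^e) := by rw [hu]; group
            have hπu : π u = zQ ^ (e*e) := by
              have hexQ := ex_pow_nat hab' hza' hzb' e e
              rw [hu]
              simp only [map_mul, map_inv, map_pow]
              rw [ha, hb, hexQ, show e*e = e*e from rfl]
              group
            have hwcen : (z ^ (e*e))⁻¹ * u ∈ Subgroup.center N := by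
              have hπw : π ((z ^ (e*e))⁻¹ * u) = 1 := by
                simp only [map_mul, map_inv, map_pow]
                rw [hπz, hπu]
                group
              have hker : (z ^ (e*e))⁻¹ * u ∈ (QuotientGroup.mk' (Subgroup.center N)).ker := by
                rw [MonoidHom.mem_ker]; exact hπw
              rwa [QuotientGroup.ker_mk'] at hker
            have hdecomp : u = z ^ (e*e) * ((z ^ (e*e))⁻¹ * u) := by group
            have hcomm_uA : Commute u (a^e) := by
              rw [hdecomp]
              exact Commute.mul_left hcz_a
                ((Subgroup.mem_center_iff.mp hwcen (a^e)).symm)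
            have hcomm_uB : Commute u (b^e) := by
              rw [hdecomp]
              exact Commute.mul_left hcz_b
                ((Subgroup.mem_center_iff.mp hwcen (b^e)).symm)
            have hufin : ¬ IsOfFinOrder u := by
              intro hf
              obtain ⟨k, hk0, hk1⟩ := isOfFinOrder_iff_pow_eq_one.mp hf
              have hq1 : (π u)^k = 1 := by rw [← map_pow, hk1, map_one]
              rw [hπu, ← pow_mul] at hq1
              exact hinf' (isOfFinOrder_iff_pow_eq_one.mpr
                ⟨e*e*k, by positivity, hq1⟩)
            exact Or.inr ⟨a^e, b^e, u, habe, hcomm_uA, hcomm_uB, hufin⟩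
          · exact Or.inr ⟨z, b, h, hzbN, (Subgroup.mem_center_iff.mp hhc z).symm,
              (Subgroup.mem_center_iff.mp hhc b).symm, hhfin⟩
        · exact Or.inr ⟨z, a, g, hzaN, (Subgroup.mem_center_iff.mp hgc z).symm,
            (Subgroup.mem_center_iff.mp hgc a).symm, hgfin⟩

lemma exists_witness (G : Type u) [Group G] [Group.FG G] (hvn : VirtuallyNilpotent G)
    (hnva : ¬ VirtuallyAbelian G) :
    ∃ a b za : G, a * b = za * (b * a) ∧ Commute za a ∧ Commute za b ∧ ¬ IsOfFinOrder za := by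
  obtain ⟨H, hHfi, hnilp⟩ := hvn
  haveI := hHfi
  haveI : Group.FG ↥H := Subgroup.fg_of_index_ne_zero H
  haveI := hnilp
  rcases nilpotent_core (Group.nilpotencyClass ↥H) ↥H le_rfl with hva | hwit
  · exact absurd (va_of_subgroup hHfi hva) hnva
  · exact witness_of_subgroup hwit

end Induction

end SGG

/-- A finitely generated virtually nilpotent group that is not virtually
abelian has a Schreier growth gap `n^4`. -/
theorem virtually_nilpotent_schreier_growth_gap_n4 (G : Type*) [Group G] [Group.FG G]
    (hvn : VirtuallyNilpotent G) (hnva : ¬ VirtuallyAbelian G) :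
    SchreierGrowthGap G (fun n => (n : ℝ) ^ 4) := by
  intro S hfin hsym hgen X _ _ _
  obtain ⟨a, b, z, hab, hza, hzb, hinf⟩ := SGG.exists_witness G hvn hnva
  exact SGG.gap_of_witness hab hza hzb hinf hfin hsym hgen
end

section
/- Let G be a finitely generated nilpotent group that is not virtually abelian. Then G contains a subgroup isomorphic to the integral Heisenberg group H₃(ℤ): there exist g, h ∈ G such that, writing c = g h g⁻¹ h⁻¹, one has c ≠ 1, g c = c g, h c = c h, and the map ℤ³ → G sending (a, b, e) to g^a h^b c^e is injective. -/
universe u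

section Aux

variable {G : Type u} [Group G]

/-- `c` has infinite order, phrased via integer powers. -/
private def InfOrd (c : G) : Prop := ∀ k : ℤ, c ^ k = 1 → k = 0

private lemma infOrd_or_finOrder (c : G) : InfOrd c ∨ IsOfFinOrder c := by
  by_cases hfin : IsOfFinOrder c
  · exact Or.inr hfin
  · refine Or.inl fun k hk => ?_
    by_contra hk0
    refine hfin (isOfFinOrder_iff_pow_eq_one.mpr ⟨k.natAbs, Int.natAbs_pos.mpr hk0, ?_⟩)
    rcases Int.natAbs_eq k with h' | h'
    · rw [← zpow_natCast, ← h', hk]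
    · rw [h', zpow_neg, inv_eq_one, zpow_natCast] at hk
      exact hk

/-- A "Heisenberg pair": the commutator has infinite order and commutes with both entries. -/
private def HeisTriple (g h : G) : Prop :=
  InfOrd (g * h * g⁻¹ * h⁻¹) ∧ Commute g (g * h * g⁻¹ * h⁻¹) ∧ Commute h (g * h * g⁻¹ * h⁻¹)

/-- Key power computation: if `h * c * h⁻¹ = t * c` with `t` central, then
`(c*h)^k = c^k * t^(k.choose 2) * h^k`. -/
private lemma pow_mul_aux {c h t : G} (hcomm : ∀ x : G, Commute t x)
    (hch : h * c = t * c * h) (k : ℕ) :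
    (c * h) ^ k = c ^ k * t ^ (k.choose 2) * h ^ k := by
  induction k with
  | zero => simp
  | succ k ih =>
    have hck : h ^ k * c = t ^ k * c * h ^ k := by
      clear ih
      induction k with
      | zero => simp
      | succ k ih2 =>
        calc h ^ (k+1) * c = h ^ k * (h * c) := by rw [pow_succ, mul_assoc]
          _ = h ^ k * (t * (c * h)) := by rw [hch, mul_assoc]
          _ = (h ^ k * t) * (c * h) := by rw [mul_assoc]
          _ = (t * h ^ k) * (c * h) := by rw [(hcomm (h ^ k)).eq]
          _ = t * (h ^ k * c * h) := by simp only [mul_assoc]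
          _ = t * (t ^ k * c * h ^ k * h) := by rw [ih2]
          _ = t ^ (k+1) * c * h ^ (k+1) := by
              rw [pow_succ t, pow_succ h]
              simp only [mul_assoc]
              rw [← mul_assoc, (hcomm (t ^ k)).eq, mul_assoc]
    calc (c * h) ^ (k+1) = (c * h) ^ k * (c * h) := pow_succ _ _
      _ = c ^ k * t ^ (k.choose 2) * h ^ k * (c * h) := by rw [ih]
      _ = c ^ k * t ^ (k.choose 2) * (h ^ k * c) * h := by simp only [mul_assoc]
      _ = c ^ k * t ^ (k.choose 2) * (t ^ k * c * h ^ k) * h := by rw [hck]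
      _ = c ^ k * ((t ^ (k.choose 2) * t ^ k) * c) * (h ^ k * h) := by simp only [mul_assoc]
      _ = c ^ k * (t ^ (k.choose 2 + k) * c) * (h ^ k * h) := by rw [pow_add]
      _ = c ^ k * (c * t ^ (k.choose 2 + k)) * (h ^ k * h) := by
            rw [((hcomm c).pow_left _).eq]
      _ = c ^ (k+1) * t ^ ((k+1).choose 2) * h ^ (k+1) := by
            rw [Nat.choose_succ_succ, Nat.choose_one_right, add_comm k (k.choose 2),
              pow_succ c, pow_succ h]
            simp only [mul_assoc]

private lemma conj_eq_iff {a x : G} (h : a * x * a⁻¹ = x) : Commute a x := by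
  have := congrArg (· * a) h
  exact (by simpa [mul_assoc] using this : a * x = x * a)

/-- Lifting a Heisenberg pair through a quotient with central torsion kernel. -/
private lemma lift_heis {Q : Type u} [Group Q] (π : G →* Q)
    (hker : ∀ z ∈ π.ker, z ∈ Subgroup.center G ∧ IsOfFinOrder z)
    (hsurj : Function.Surjective π)
    (hQ : ∃ g h : Q, HeisTriple g h) : ∃ g h : G, HeisTriple g h := by
  obtain ⟨A, B, hord, hc1, hc2⟩ := hQ
  obtain ⟨g, hg⟩ := hsurj A
  obtain ⟨h0, hh0⟩ := hsurj B
  set c0 : G := g * h0 * g⁻¹ * h0⁻¹ with hc0def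
  have hπc0 : π c0 = A * B * A⁻¹ * B⁻¹ := by
    simp [hc0def, map_mul, map_inv, hg, hh0]
  set t1 : G := g * c0 * g⁻¹ * c0⁻¹ with ht1def
  set t2 : G := h0 * c0 * h0⁻¹ * c0⁻¹ with ht2def
  have ht1ker : t1 ∈ π.ker := by
    rw [MonoidHom.mem_ker, ht1def]
    rw [map_mul, map_mul, map_mul, map_inv, map_inv, hπc0, hg]
    rw [hc1.eq]
    group
  have ht2ker : t2 ∈ π.ker := by
    rw [MonoidHom.mem_ker, ht2def]
    rw [map_mul, map_mul, map_mul, map_inv, map_inv, hπc0, hh0]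
    rw [hc2.eq]
    group
  have com1 : ∀ x : G, Commute t1 x := fun x =>
    (Subgroup.mem_center_iff.mp (hker _ ht1ker).1 x).symm
  have com2 : ∀ x : G, Commute t2 x := fun x =>
    (Subgroup.mem_center_iff.mp (hker _ ht2ker).1 x).symm
  set m1 := orderOf t1 with hm1def
  set m2 := orderOf t2 with hm2def
  have hm1 : 0 < m1 := (hker _ ht1ker).2.orderOf_pos
  have hm2 : 0 < m2 := (hker _ ht2ker).2.orderOf_pos
  set n := 2 * m1 * m2 with hndef
  have hn : 0 < n := by positivity
  -- basic conjugation identities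
  have hA : g * c0 * g⁻¹ = t1 * c0 := by rw [ht1def]; group
  have hB : h0 * c0 = t2 * c0 * h0 := by rw [ht2def]; group
  have hC : g * h0 * g⁻¹ = c0 * h0 := by rw [hc0def]; group
  -- the key identity
  have hE : ∀ k : ℕ, g * h0 ^ k * g⁻¹ = c0 ^ k * t2 ^ (k.choose 2) * h0 ^ k := by
    intro k
    have h1 : g * h0 ^ k * g⁻¹ = (g * h0 * g⁻¹) ^ k := by
      rw [conj_pow]
    rw [h1, hC]
    exact pow_mul_aux com2 hB k
  have hdvd2 : m2 ∣ n.choose 2 := by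
    have h2 : n.choose 2 = m1 * m2 * (n - 1) := by
      rw [Nat.choose_two_right]
      have : n * (n - 1) = 2 * (m1 * m2 * (n - 1)) := by rw [hndef]; ring
      rw [this, Nat.mul_div_cancel_left _ (by norm_num : 0 < 2)]
    exact h2 ▸ ⟨m1 * (n - 1), by ring⟩
  have ht2n : t2 ^ (n.choose 2) = 1 := orderOf_dvd_iff_pow_eq_one.mp hdvd2
  have ht1n : t1 ^ n = 1 := orderOf_dvd_iff_pow_eq_one.mp ⟨2 * m2, by rw [hndef]; ring⟩
  have ht2n' : t2 ^ n = 1 := orderOf_dvd_iff_pow_eq_one.mp ⟨2 * m1, by rw [hndef]; ring⟩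
  -- the new pair
  refine ⟨g, h0 ^ n, ?_⟩
  have hgh : g * h0 ^ n * g⁻¹ * (h0 ^ n)⁻¹ = c0 ^ n := by
    rw [hE n, ht2n, mul_one, mul_assoc, mul_inv_cancel, mul_one]
  have hcomg : Commute g (c0 ^ n) := by
    apply conj_eq_iff
    have : g * c0 ^ n * g⁻¹ = (g * c0 * g⁻¹) ^ n := by rw [conj_pow]
    rw [this, hA, (com1 c0).mul_pow, ht1n, one_mul]
  have hcomh0 : Commute h0 (c0 ^ n) := by
    apply conj_eq_iff
    have : h0 * c0 ^ n * h0⁻¹ = (h0 * c0 * h0⁻¹) ^ n := by rw [conj_pow]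
    have hB' : h0 * c0 * h0⁻¹ = t2 * c0 := by rw [hB]; group
    rw [this, hB', (com2 c0).mul_pow, ht2n', one_mul]
  refine ⟨?_, ?_, ?_⟩
  · -- infinite order
    rw [hgh]
    intro k hk
    have : π ((c0 ^ n) ^ k) = 1 := by rw [hk, map_one]
    rw [map_zpow, map_pow, hπc0] at this
    rw [← zpow_natCast (A * B * A⁻¹ * B⁻¹) n, ← zpow_mul] at this
    have := hord _ this
    have hn0 : (n : ℤ) ≠ 0 := Int.natCast_ne_zero.mpr hn.ne'
    exact (mul_eq_zero.mp this).resolve_left hn0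
  · rw [hgh]; exact hcomg
  · rw [hgh]; exact hcomh0.pow_left n

/-- An abelian group is virtually abelian. -/
private lemma va_of_forall_comm (hab : ∀ a b : G, a * b = b * a) : VirtuallyAbelian G :=
  ⟨⊤, inferInstance, fun a b => Subtype.ext (hab a b)⟩

/-- Lifting virtual abelianness through a quotient by a central torsion subgroup. -/
private lemma va_lift [Group.FG G] {L : Subgroup G} [L.Normal]
    (hcen : L ≤ Subgroup.center G) (htor : ∀ z ∈ L, IsOfFinOrder z)
    (hva : VirtuallyAbelian (G ⧸ L)) : VirtuallyAbelian G := by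
  obtain ⟨Hb, hfi, hab⟩ := hva
  set π := QuotientGroup.mk' L with hπdef
  set H : Subgroup G := Hb.comap π with hHdef
  have hHi : H.index ≠ 0 := by
    rw [hHdef, Subgroup.index_comap_of_surjective _ (QuotientGroup.mk'_surjective L)]
    exact hfi.index_ne_zero
  haveI : H.FiniteIndex := ⟨hHi⟩
  haveI : Group.FG ↥H := H.fg_of_index_ne_zero
  obtain ⟨S, hSclos, hSfin⟩ := (Subgroup.fg_iff H).mp ((Group.fg_iff_subgroup_fg H).mp inferInstance)
  haveI : Finite ↥S := hSfin.to_subtype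
  have hxH : ∀ x ∈ S, x ∈ H := fun x hx => hSclos ▸ Subgroup.subset_closure hx
  have hcom : ∀ a b : G, a ∈ H → b ∈ H → a * b * a⁻¹ * b⁻¹ ∈ L := by
    intro a b ha hb
    have hq : π a * π b = π b * π a := by
      have := hab ⟨π a, ha⟩ ⟨π b, hb⟩
      rwa [Subtype.ext_iff, MulMemClass.coe_mul, MulMemClass.coe_mul] at this
    have : π (a * b * a⁻¹ * b⁻¹) = 1 := by
      rw [map_mul, map_mul, map_mul, map_inv, map_inv, hq]
      group
    rwa [← MonoidHom.mem_ker, QuotientGroup.ker_mk'] at this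
  let φ : ↥S → (↥H →* G) := fun x =>
    { toFun := fun a => (a : G) * (x : G) * (a : G)⁻¹ * (x : G)⁻¹
      map_one' := by simp
      map_mul' := by
        intro a b
        set A := (a : G); set B := (b : G); set X := (x : G)
        have hzL : B * X * B⁻¹ * X⁻¹ ∈ L := hcom _ _ b.2 (hxH _ x.2)
        set z := B * X * B⁻¹ * X⁻¹ with hzdef
        have hz : ∀ w : G, z * w = w * z :=
          fun w => (Subgroup.mem_center_iff.mp (hcen hzL) w).symm
        have h1 : B * X * B⁻¹ = z * X := by rw [hzdef]; group
        show ((a * b : ↥H) : G) * X * ((a * b : ↥H) : G)⁻¹ * X⁻¹ = (A * X * A⁻¹ * X⁻¹) * z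
        rw [MulMemClass.coe_mul]
        calc A * B * X * (A * B)⁻¹ * X⁻¹ = A * (B * X * B⁻¹) * A⁻¹ * X⁻¹ := by group
          _ = A * (z * X) * A⁻¹ * X⁻¹ := by rw [h1]
          _ = (A * z) * (X * A⁻¹ * X⁻¹) := by simp only [mul_assoc]
          _ = (z * A) * (X * A⁻¹ * X⁻¹) := by rw [← hz A]
          _ = z * (A * X * A⁻¹ * X⁻¹) := by simp only [mul_assoc]
          _ = (A * X * A⁻¹ * X⁻¹) * z := hz _ }
  have hrange : ∀ (x : ↥S) (y : G), y ∈ (φ x).range → y ∈ L := by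
    rintro x y ⟨a, rfl⟩
    exact hcom _ _ a.2 (hxH _ x.2)
  have hker_fi : ∀ x : ↥S, (φ x).ker.FiniteIndex := by
    intro x
    haveI : Group.FG ↥(φ x).range := Group.fg_range _
    haveI : IsMulCommutative ↥(φ x).range := by
      constructor; constructor
      intro a b
      exact Subtype.ext (Subgroup.mem_center_iff.mp (hcen (hrange x _ a.2)) (b : G)).symm
    haveI : Finite ↥(φ x).range := by
      open scoped IsMulCommutative in apply CommGroup.finite_of_fg_torsion
      intro a
      have h1 : IsOfFinOrder (a : G) := htor _ (hrange x _ a.2)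
      obtain ⟨m, hm, hm1⟩ := isOfFinOrder_iff_pow_eq_one.mp h1
      refine isOfFinOrder_iff_pow_eq_one.mpr ⟨m, hm, Subtype.ext ?_⟩
      push_cast
      exact hm1
    constructor
    rw [Subgroup.index_ker]
    exact Nat.card_ne_zero.mpr ⟨⟨1, one_mem _⟩, inferInstance⟩
  set K : Subgroup ↥H := ⨅ x : ↥S, (φ x).ker with hKdef
  haveI hKfi : K.FiniteIndex := Subgroup.finiteIndex_iInf fun x => hker_fi x
  set A : Subgroup G := K.map H.subtype with hAdef
  have hAH : A ≤ H := Subgroup.map_subtype_le K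
  have habel : ∀ a ∈ A, ∀ b ∈ H, a * b = b * a := by
    intro a ha b hb
    obtain ⟨a', ha', rfl⟩ := ha
    have hxa : ∀ x ∈ S, (a' : G) * x = x * (a' : G) := by
      intro x hx
      have hk : a' ∈ (φ ⟨x, hx⟩).ker := Subgroup.mem_iInf.mp ha' ⟨x, hx⟩
      have h1 : (a' : G) * x * (a' : G)⁻¹ * x⁻¹ = 1 := hk
      have h2 : (a' : G) * x * (a' : G)⁻¹ = x := by
        have := congrArg (· * x) h1
        simpa [mul_assoc] using this
      have := congrArg (· * (a' : G)) h2
      simpa [mul_assoc] using this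
    have hHc : H ≤ Subgroup.centralizer {(a' : G)} := by
      refine le_of_eq_of_le hSclos.symm ((Subgroup.closure_le _).mpr ?_)
      intro x hx
      rw [SetLike.mem_coe, Subgroup.mem_centralizer_iff]
      intro g hg
      rw [Set.mem_singleton_iff] at hg
      rw [hg]
      exact hxa x hx
    exact Subgroup.mem_centralizer_iff.mp (hHc hb) _ rfl
  have hAfi : A.FiniteIndex := by
    have h1 : A.subgroupOf H = K := by
      rw [hAdef]
      exact Subgroup.comap_map_eq_self_of_injective H.subtype_injective K
    have h2 : A.relIndex H * H.index = A.index := Subgroup.relIndex_mul_index hAH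
    constructor
    rw [← h2]
    have h3 : A.relIndex H ≠ 0 := by
      rw [Subgroup.relIndex, h1]
      exact hKfi.index_ne_zero
    exact mul_ne_zero h3 hHi
  refine ⟨A, hAfi, fun a b => Subtype.ext ?_⟩
  rw [MulMemClass.coe_mul, MulMemClass.coe_mul]
  exact habel _ a.2 _ (hAH b.2)

private lemma lcs_succ_eq' (n : ℕ) :
    (⊤ : Subgroup G).lowerCentralSeries (n + 1) = ⁅(⊤ : Subgroup G).lowerCentralSeries n, ⊤⁆ := rfl

private lemma lcs_le_map {Q : Type u} [Group Q] (f : G →* Q)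
    (hf : Function.Surjective f) (n : ℕ) :
    (⊤ : Subgroup Q).lowerCentralSeries n ≤ Subgroup.map f ((⊤ : Subgroup G).lowerCentralSeries n) := by
  induction n with
  | zero =>
    rw [lowerCentralSeries_zero, lowerCentralSeries_zero, Subgroup.map_top_of_surjective f hf]
  | succ k ih =>
    rw [lcs_succ_eq', lcs_succ_eq', Subgroup.map_commutator]
    exact Subgroup.commutator_mono ih (le_of_eq (Subgroup.map_top_of_surjective f hf).symm)

end Aux

open scoped commutatorElement

private lemma main_ind (n : ℕ) : ∀ (G : Type u) [Group G] [Group.FG G],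
    (⊤ : Subgroup G).lowerCentralSeries n = ⊥ →
    (∃ g h : G, HeisTriple g h) ∨ VirtuallyAbelian G := by
  induction n with
  | zero =>
    intro G _ _ hbot
    right
    apply va_of_forall_comm
    intro a b
    have h1 : a ∈ (⊥ : Subgroup G) := by
      rw [← hbot, lowerCentralSeries_zero]; exact Subgroup.mem_top a
    have h2 : b ∈ (⊥ : Subgroup G) := by
      rw [← hbot, lowerCentralSeries_zero]; exact Subgroup.mem_top b
    rw [Subgroup.mem_bot] at h1 h2
    rw [h1, h2]
  | succ m IH =>
    intro G _ _ hbot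
    cases m with
    | zero =>
      right
      apply va_of_forall_comm
      intro a b
      have h1 : ⁅a, b⁆ ∈ (⊤ : Subgroup G).lowerCentralSeries 1 := by
        rw [lowerCentralSeries_succ]
        exact Subgroup.commutator_mem_commutator
          (by rw [lowerCentralSeries_zero]; exact Subgroup.mem_top a) (Subgroup.mem_top b)
      rw [hbot, Subgroup.mem_bot, commutatorElement_eq_one_iff_mul_comm] at h1
      exact h1
    | succ m' =>
      set L := (⊤ : Subgroup G).lowerCentralSeries (m' + 1) with hLdef
      have hLcen : L ≤ Subgroup.center G := by
        intro z hz
        rw [Subgroup.mem_center_iff]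
        intro g
        have h1 : ⁅z, g⁆ ∈ (⊤ : Subgroup G).lowerCentralSeries (m' + 2) := by
          rw [lowerCentralSeries_succ]
          exact Subgroup.commutator_mem_commutator hz (Subgroup.mem_top g)
        rw [hbot, Subgroup.mem_bot, commutatorElement_eq_one_iff_mul_comm] at h1
        exact h1.symm
      by_cases hcase : ∀ x ∈ (⊤ : Subgroup G).lowerCentralSeries m', ∀ y : G, IsOfFinOrder ⁅x, y⁆
      · -- all bottom commutators torsion: pass to the quotient
        have hLtor : ∀ z ∈ L, IsOfFinOrder z := by
          set T : Subgroup G :=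
            { carrier := {z | z ∈ Subgroup.center G ∧ IsOfFinOrder z}
              one_mem' := ⟨Subgroup.one_mem _, IsOfFinOrder.one⟩
              mul_mem' := by
                rintro a b ⟨hac, hat⟩ ⟨hbc, hbt⟩
                exact ⟨Subgroup.mul_mem _ hac hbc,
                  Commute.isOfFinOrder_mul (Subgroup.mem_center_iff.mp hac b).symm hat hbt⟩
              inv_mem' := by
                rintro a ⟨hac, hat⟩
                exact ⟨Subgroup.inv_mem _ hac, hat.inv⟩ } with hTdef
          have hLT : L ≤ T := by
            rw [hLdef, lowerCentralSeries_succ]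
            apply Subgroup.commutator_le.mpr
            intro x hx y hy
            have hmem : ⁅x, y⁆ ∈ L := by
              rw [hLdef, lowerCentralSeries_succ]
              exact Subgroup.commutator_mem_commutator hx hy
            exact ⟨hLcen hmem, hcase x hx y⟩
          exact fun z hz => (hLT hz).2
        have hQbot : lowerCentralSeries (⊤ : Subgroup (G ⧸ L)) (m' + 1) = ⊥ := by
          apply le_bot_iff.mp
          calc lowerCentralSeries (⊤ : Subgroup (G ⧸ L)) (m' + 1)
              ≤ Subgroup.map (QuotientGroup.mk' L) ((⊤ : Subgroup G).lowerCentralSeries (m' + 1)) :=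
                lcs_le_map _ (QuotientGroup.mk'_surjective L) _
            _ = ⊥ := by
                rw [Subgroup.map_eq_bot_iff, QuotientGroup.ker_mk']
        rcases IH (G ⧸ L) hQbot with hheis | hva
        · left
          exact lift_heis (QuotientGroup.mk' L)
            (fun z hz => by
              rw [QuotientGroup.ker_mk'] at hz
              exact ⟨hLcen hz, hLtor z hz⟩)
            (QuotientGroup.mk'_surjective L) hheis
        · right
          exact va_lift hLcen hLtor hva
      · -- found a central commutator of infinite order
        push_neg at hcase
        obtain ⟨x, hx, y, hy⟩ := hcase
        left
        have hmem : ⁅x, y⁆ ∈ L := by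
          rw [hLdef, lowerCentralSeries_succ]
          exact Subgroup.commutator_mem_commutator hx (Subgroup.mem_top y)
        have hcen := Subgroup.mem_center_iff.mp (hLcen hmem)
        rw [commutatorElement_def] at hcen hy
        refine ⟨x, y, ?_, hcen x, hcen y⟩
        rcases infOrd_or_finOrder (x * y * x⁻¹ * y⁻¹) with h | h
        · exact h
        · exact absurd h hy

/-- A finitely generated nilpotent group that is not virtually abelian
contains a copy of the integral Heisenberg group `H₃(ℤ)`: there are `g, h` such that
`c = [g,h]` is nontrivial and central among `g, h, c`, and `(a,b,e) ↦ g^a h^b c^e` is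
injective on `ℤ³`. -/
theorem nilpotent_contains_heisenberg (G : Type*) [Group G] [Group.FG G]
    [Group.IsNilpotent G] (hnva : ¬ VirtuallyAbelian G) :
    ∃ g h : G,
      g * h * g⁻¹ * h⁻¹ ≠ 1 ∧
      Commute g (g * h * g⁻¹ * h⁻¹) ∧
      Commute h (g * h * g⁻¹ * h⁻¹) ∧
      Function.Injective
        (fun p : ℤ × ℤ × ℤ => g ^ p.1 * h ^ p.2.1 * (g * h * g⁻¹ * h⁻¹) ^ p.2.2) := by
  obtain ⟨n, hn⟩ := nilpotent_iff_lowerCentralSeries.mp ‹Group.IsNilpotent G›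
  rcases main_ind n G hn with ⟨g, h, hord, hcg, hch⟩ | hva
  swap
  · exact absurd hva hnva
  set c : G := g * h * g⁻¹ * h⁻¹ with hcdef
  have hone : c ≠ 1 := by
    intro h1
    have := hord 1 (by rw [h1, one_zpow])
    norm_num at this
  refine ⟨g, h, hone, hcg, hch, ?_⟩
  rw [← hcdef]
  -- conjugation identities
  have hhg : h * g * h⁻¹ = c⁻¹ * g := by rw [hcdef]; group
  have hgh : g * h * g⁻¹ = c * h := by rw [hcdef]; group
  have hhc : h * c * h⁻¹ = c := by
    rw [hch.eq]; group
  have hgc : g * c * g⁻¹ = c := by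
    rw [hcg.eq]; group
  have key1 : ∀ a b e : ℤ, (MulAut.conj h) (g ^ a * h ^ b * c ^ e)
      = c ^ (-a) * (g ^ a * h ^ b * c ^ e) := by
    intro a b e
    have e1 : (MulAut.conj h) g = c⁻¹ * g := by simpa [MulAut.conj_apply] using hhg
    have e2 : (MulAut.conj h) h = h := by simp [MulAut.conj_apply]
    have e3 : (MulAut.conj h) c = c := by simpa [MulAut.conj_apply] using hhc
    have hcomm : Commute c⁻¹ g := (hcg.symm.inv_left)
    rw [map_mul, map_mul, map_zpow, map_zpow, map_zpow, e1, e2, e3,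
      hcomm.mul_zpow, inv_zpow, ← zpow_neg]
    simp only [mul_assoc]
  have key2 : ∀ a b e : ℤ, (MulAut.conj g) (g ^ a * h ^ b * c ^ e)
      = c ^ b * (g ^ a * h ^ b * c ^ e) := by
    intro a b e
    have e1 : (MulAut.conj g) g = g := by simp [MulAut.conj_apply]
    have e2 : (MulAut.conj g) h = c * h := by simpa [MulAut.conj_apply] using hgh
    have e3 : (MulAut.conj g) c = c := by simpa [MulAut.conj_apply] using hgc
    have hcomm : Commute c h := hch.symm
    have hgca : Commute (g ^ a) (c ^ b) := hcg.zpow_zpow a b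
    rw [map_mul, map_mul, map_zpow, map_zpow, map_zpow, e1, e2, e3, hcomm.mul_zpow]
    rw [← mul_assoc (g ^ a), hgca.eq]
    simp only [mul_assoc]
  intro p q hpq
  simp only at hpq
  have h1 : p.1 = q.1 := by
    have hc1 := key1 p.1 p.2.1 p.2.2
    have hc2 := key1 q.1 q.2.1 q.2.2
    rw [hpq] at hc1
    rw [hc1] at hc2
    have h3 : c ^ (-p.1) = c ^ (-q.1) := mul_right_cancel hc2
    have h4 : c ^ (q.1 - p.1) = 1 := by
      rw [sub_eq_add_neg, zpow_add, h3, ← zpow_add]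
      simp
    have := hord _ h4
    omega
  have h2 : p.2.1 = q.2.1 := by
    have hc1 := key2 p.1 p.2.1 p.2.2
    have hc2 := key2 q.1 q.2.1 q.2.2
    rw [hpq] at hc1
    rw [hc1] at hc2
    have h3 : c ^ p.2.1 = c ^ q.2.1 := mul_right_cancel hc2
    have h4 : c ^ (p.2.1 - q.2.1) = 1 := by
      rw [sub_eq_add_neg, zpow_add, h3, ← zpow_add]
      simp
    have := hord _ h4
    omega
  have h3 : p.2.2 = q.2.2 := by
    rw [h1, h2] at hpq
    have h5 : c ^ p.2.2 = c ^ q.2.2 := mul_left_cancel hpq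
    have h4 : c ^ (p.2.2 - q.2.2) = 1 := by
      rw [sub_eq_add_neg, zpow_add, h5, ← zpow_add]
      simp
    have := hord _ h4
    omega
  exact Prod.ext h1 (Prod.ext h2 h3)
end

section
/- Let d ≥ 1 and let A be a nontrivial finite abelian group. Let G = A ≀ ℤ^d be the wreath product, i.e., the semidirect product (⊕_{ℤ^d} A) ⋊ ℤ^d where ℤ^d acts on the direct sum of copies of A indexed by ℤ^d by translating coordinates. Then the base subgroup ℤ^d (the canonical copy of ℤ^d in the semidirect product) is a non-foldable subset of G, and G has a Schreier growth gap n^d. -/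
/-- A subset `L` of a group `G` is non-foldable if for every faithful nonempty `G`-set `X` and
every finite subset `s ⊆ L` there exists `x ∈ X` on which the orbital map is injective. -/
def NonFoldableSubset {G : Type*} [Group G] (L : Set G) : Prop :=
  ∀ (X : Type*) [MulAction G X] [Nonempty X] [FaithfulSMul G X],
    ∀ s : Set G, s ⊆ L → s.Finite → ∃ x : X, Set.InjOn (fun g : G => g • x) s

/-- The translation action of `ℤ^d` on `⊕_{ℤ^d} A`, as a homomorphism to the automorphism
group of the (multiplicatively written) base group of the wreath product `A ≀ ℤ^d`. -/
noncomputable def wreathShift (d : ℕ) (A : Type*) [AddCommGroup A] :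
    Multiplicative (Fin d → ℤ) →* MulAut (Multiplicative ((Fin d → ℤ) →₀ A)) :=
  MonoidHom.mk'
    (fun q => AddEquiv.toMultiplicative (Finsupp.domCongr (Equiv.addLeft q.toAdd)))
    (by
      intro a b
      refine MulEquiv.ext fun f => ?_
      show (Finsupp.domCongr (M := A) (Equiv.addLeft (a*b).toAdd)) f
          = (Finsupp.domCongr (Equiv.addLeft a.toAdd))
              ((Finsupp.domCongr (Equiv.addLeft b.toAdd)) f)
      ext x
      show (Multiplicative.toAdd f) (-(a*b).toAdd + x)
          = (Multiplicative.toAdd f) (-b.toAdd + (-a.toAdd + x))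
      rw [toAdd_mul, neg_add_rev, add_assoc])

/-- The wreath product `A ≀ ℤ^d`: the semidirect product `(⊕_{ℤ^d} A) ⋊ ℤ^d` where `ℤ^d`
acts on the direct sum by translating coordinates. -/
noncomputable abbrev WreathProd (d : ℕ) (A : Type*) [AddCommGroup A] :=
  SemidirectProduct (Multiplicative ((Fin d → ℤ) →₀ A)) (Multiplicative (Fin d → ℤ))
    (wreathShift d A)


namespace WreathPf
open SemidirectProduct Multiplicative

variable {d : ℕ} {A : Type*} [AddCommGroup A]

lemma shift_apply (q : Fin d → ℤ) (f : (Fin d → ℤ) →₀ A) :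
    (wreathShift d A (ofAdd q)) (ofAdd f)
      = ofAdd (Finsupp.domCongr (M := A) (Equiv.addLeft q) f) := rfl

section pa
variable (p : ℕ) [Fact p.Prime] (a : A) (ha : (p : ℤ) • a = 0)

noncomputable def ea : ZMod p →+ A := ZMod.lift p ⟨zmultiplesHom A a, ha⟩

lemma ea_intCast (z : ℤ) : ea p a ha ((z : ZMod p)) = z • a := ZMod.lift_coe p _ z

lemma ea_inj (hord : addOrderOf a = p) : Function.Injective (ea p a ha) := by
  rw [injective_iff_map_eq_zero]
  intro z hz
  have hp : (p : ℕ) ≠ 0 := (Fact.out : p.Prime).ne_zero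
  haveI : NeZero p := ⟨hp⟩
  have hv : (((z.val : ℤ) : ZMod p)) = z := by push_cast [ZMod.natCast_val, ZMod.cast_id]; rfl
  have h1 : (z.val : ℤ) • a = 0 := by rw [← ea_intCast p a ha, hv, hz]
  have h2 : z.val • a = 0 := by rwa [natCast_zsmul] at h1
  have hdvd : addOrderOf a ∣ z.val := addOrderOf_dvd_of_nsmul_eq_zero h2
  rw [hord] at hdvd
  have : z.val = 0 := Nat.eq_zero_of_dvd_of_lt hdvd (ZMod.val_lt z)
  exact (ZMod.val_eq_zero z).mp this

/-- `j` map from the group algebra into the base. -/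
noncomputable def jR : AddMonoidAlgebra (ZMod p) (Fin d → ℤ) →+ ((Fin d → ℤ) →₀ A) :=
  (Finsupp.mapRange.addMonoidHom (ea p a ha)).comp AddMonoidAlgebra.coeffAddEquiv.toAddMonoidHom

lemma jR_single (q : Fin d → ℤ) (z : ZMod p) :
    jR p a ha (AddMonoidAlgebra.single q z) = Finsupp.single q (ea p a ha z) := by
  classical
  show Finsupp.mapRange (ea p a ha) (map_zero _) (Finsupp.single q z)
      = Finsupp.single q (ea p a ha z)
  rw [Finsupp.mapRange_single]

lemma jR_inj (hord : addOrderOf a = p) : Function.Injective (jR p a ha (d := d)) :=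
  fun _ _ h => AddMonoidAlgebra.coeffAddEquiv.injective
    (Finsupp.mapRange_injective (ea p a ha) (map_zero _) (ea_inj p a ha hord) h)

/-- key algebra lemma: shifting the embedded element is multiplication by a monomial. -/
lemma shift_jR (q : Fin d → ℤ) (r : AddMonoidAlgebra (ZMod p) (Fin d → ℤ)) :
    Finsupp.domCongr (M := A) (Equiv.addLeft q) (jR p a ha r)
      = jR p a ha (AddMonoidAlgebra.single q 1 * r) := by
  classical
  induction r using AddMonoidAlgebra.induction_linear with
  | zero => simp
  | add f g hf hg =>
      rw [map_add, map_add, mul_add, map_add, hf, hg]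
  | single s z =>
      rw [jR_single, AddMonoidAlgebra.single_mul_single, one_mul, jR_single]
      show Finsupp.equivMapDomain (Equiv.addLeft q) (Finsupp.single s (ea p a ha z)) = _
      rw [Finsupp.equivMapDomain_single]
      simp

end pa
end WreathPf

section main
namespace WreathPf
open SemidirectProduct Multiplicative
open scoped Pointwise

variable (d : ℕ) (A : Type*) [AddCommGroup A]

/-- the shift automorphism as a `MulEquiv` -/
noncomputable def sg (c : Fin d → ℤ) :
    Multiplicative ((Fin d → ℤ) →₀ A) ≃* Multiplicative ((Fin d → ℤ) →₀ A) :=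
  wreathShift d A (ofAdd c)

lemma sg_ofAdd (c : Fin d → ℤ) (f : (Fin d → ℤ) →₀ A) :
    sg d A c (ofAdd f) = ofAdd (Finsupp.domCongr (M := A) (Equiv.addLeft c) f) := rfl

/-- the "1 - σ_c" homomorphism, multiplicatively -/
noncomputable def psi (c : Fin d → ℤ) :
    Multiplicative ((Fin d → ℤ) →₀ A) →* Multiplicative ((Fin d → ℤ) →₀ A) :=
  MonoidHom.mk' (fun f => f * (sg d A c f)⁻¹) (by
    intro f g
    simp only [map_mul, mul_inv]
    simp [mul_comm, mul_left_comm, mul_assoc])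

lemma psi_apply (c : Fin d → ℤ) (f : Multiplicative ((Fin d → ℤ) →₀ A)) :
    psi d A c f = f * (sg d A c f)⁻¹ := rfl

lemma sg_psi_comm (c : Fin d → ℤ) (f : Multiplicative ((Fin d → ℤ) →₀ A)) :
    sg d A c (psi d A c f) = psi d A c (sg d A c f) := by
  rw [psi_apply, psi_apply, map_mul, map_inv]

lemma sg_symm_psi_comm (c : Fin d → ℤ) (f : Multiplicative ((Fin d → ℤ) →₀ A)) :
    (sg d A c).symm (psi d A c f) = psi d A c ((sg d A c).symm f) := by
  rw [psi_apply, psi_apply, map_mul, map_inv, (sg d A c).symm_apply_apply,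
    (sg d A c).apply_symm_apply]

lemma inr_mul_inl (q : Multiplicative (Fin d → ℤ)) (f : Multiplicative ((Fin d → ℤ) →₀ A)) :
    (inr q : WreathProd d A) * inl f = inl (wreathShift d A q f) * inr q := by
  rw [SemidirectProduct.inl_aut, map_inv, inv_mul_cancel_right]

section pmain

variable (p : ℕ) [Fact p.Prime] (a : A) (ha : zmultiplesHom A a (p : ℤ) = 0)

lemma sg_jR (c : Fin d → ℤ) (r : AddMonoidAlgebra (ZMod p) (Fin d → ℤ)) :
    sg d A c (ofAdd (jR p a ha r)) = ofAdd (jR p a ha (AddMonoidAlgebra.single c 1 * r)) := by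
  rw [sg_ofAdd]
  exact congrArg ofAdd (shift_jR p a ha c r)

lemma psi_jR (c : Fin d → ℤ) (r : AddMonoidAlgebra (ZMod p) (Fin d → ℤ)) :
    psi d A c (ofAdd (jR p a ha r))
      = ofAdd (jR p a ha ((1 - AddMonoidAlgebra.single c 1) * r)) := by
  rw [psi_apply, sg_jR, ← div_eq_mul_inv, ← ofAdd_sub, ← map_sub, sub_mul, one_mul]

variable (X : Type*) [MulAction (WreathProd d A) X]

lemma key (D : Finset (Fin d → ℤ))
    (hcon : ∀ x : X, ∃ c ∈ D, (inr (ofAdd c) : WreathProd d A) • x = x) (x : X) :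
    ∃ c ∈ D, ∀ r : AddMonoidAlgebra (ZMod p) (Fin d → ℤ),
      (inl (ofAdd (jR p a ha ((1 - AddMonoidAlgebra.single c 1) *
        (1 - AddMonoidAlgebra.single (Nat.factorial D.card • c) 1) * r))) : WreathProd d A) • x = x := by
  classical
  set M : ℕ := Nat.factorial D.card with hM
  -- the stabilizer, pulled back to the base group
  set St : Subgroup (Multiplicative ((Fin d → ℤ) →₀ A)) :=
    (MulAction.stabilizer (WreathProd d A) x).comap inl with hSt
  have mem_St : ∀ f, f ∈ St ↔ (inl f : WreathProd d A) • x = x := fun f => Iff.rfl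
  -- the coset covering
  set V : (Fin d → ℤ) → Set (Multiplicative ((Fin d → ℤ) →₀ A)) := fun c =>
    {f | (inl (psi d A c f) : WreathProd d A) • x = (inr (ofAdd c) : WreathProd d A) • x}
    with hV
  have smul_inr_inl : ∀ (c : Fin d → ℤ) (f : Multiplicative ((Fin d → ℤ) →₀ A)) (y : X),
      (inr (ofAdd c) : WreathProd d A) • (inl f : WreathProd d A) • y
        = (inl (sg d A c f) : WreathProd d A) • (inr (ofAdd c) : WreathProd d A) • y := by
    intro c f y
    rw [smul_smul, smul_smul, inr_mul_inl]
    rfl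
  have hcover : ∀ f, ∃ c ∈ D, f ∈ V c := by
    intro f
    obtain ⟨c, hcD, hfix⟩ := hcon ((inl f : WreathProd d A) • x)
    refine ⟨c, hcD, ?_⟩
    rw [smul_inr_inl] at hfix
    show (inl (psi d A c f) : WreathProd d A) • x = (inr (ofAdd c) : WreathProd d A) • x
    have : psi d A c f = (sg d A c f)⁻¹ * f := by rw [psi_apply, mul_comm]
    rw [this, map_mul, ← smul_smul, map_inv, ← hfix, smul_smul, smul_smul, inv_mul_cancel,
      one_mul]
  set U : (Fin d → ℤ) → Subgroup (Multiplicative ((Fin d → ℤ) →₀ A)) := fun c =>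
    St.comap (psi d A c) with hU
  set g : (Fin d → ℤ) → Multiplicative ((Fin d → ℤ) →₀ A) := fun c =>
    if h : (V c).Nonempty then h.choose else 1 with hg
  set s : Finset (Fin d → ℤ) := D.filter (fun c => (V c).Nonempty) with hs
  have hVcoset : ∀ c, ∀ b₀ ∈ V c, ∀ f, (inl (psi d A c ((b₀)⁻¹ * f)) : WreathProd d A) • x = x
      ↔ f ∈ V c := by
    intro c b₀ hb₀ f
    have hb : (inl (psi d A c b₀) : WreathProd d A) • x
        = (inr (ofAdd c) : WreathProd d A) • x := hb₀
    rw [map_mul, map_inv, map_mul, map_inv, ← smul_smul, inv_smul_eq_iff, hb]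
    exact Iff.rfl
  have hUnion : ⋃ c ∈ s, (g c) • ((U c : Set (Multiplicative ((Fin d → ℤ) →₀ A)))) = Set.univ := by
    rw [Set.eq_univ_iff_forall]
    intro f
    obtain ⟨c, hcD, hfV⟩ := hcover f
    have hne : (V c).Nonempty := ⟨f, hfV⟩
    refine Set.mem_biUnion (Finset.mem_filter.mpr ⟨hcD, hne⟩) ?_
    rw [mem_leftCoset_iff]
    have hgc : g c ∈ V c := by
      rw [hg]; simp only [dif_pos hne]; exact hne.choose_spec
    show psi d A c ((g c)⁻¹ * f) ∈ St
    rw [mem_St]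
    exact (hVcoset c (g c) hgc f).mpr hfV
  obtain ⟨c, hcs, hUFin, hUind⟩ := Subgroup.exists_index_le_card_of_leftCoset_cover hUnion
  have hcD : c ∈ D := (Finset.mem_filter.mp hcs).1
  have hVne : (V c).Nonempty := (Finset.mem_filter.mp hcs).2
  obtain ⟨b₀, hb₀⟩ := hVne
  refine ⟨c, hcD, ?_⟩
  -- the fixed point y and the invariance of the stabilizer
  have hb : (inl (psi d A c b₀) : WreathProd d A) • x
      = (inr (ofAdd c) : WreathProd d A) • x := hb₀
  have hy : (inr (ofAdd c) : WreathProd d A) • ((inl b₀ : WreathProd d A) • x)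
      = (inl b₀ : WreathProd d A) • x := by
    rw [smul_inr_inl, ← hb, smul_smul, ← map_mul, psi_apply]
    congr 2
    rw [mul_comm, inv_mul_cancel_right]
  have hyinv : ((inr (ofAdd c) : WreathProd d A))⁻¹ • ((inl b₀ : WreathProd d A) • x)
      = (inl b₀ : WreathProd d A) • x := by
    rw [inv_smul_eq_iff, hy]
  have hy2 : ∀ f, ((inl f : WreathProd d A) • ((inl b₀ : WreathProd d A) • x)
      = (inl b₀ : WreathProd d A) • x) ↔ f ∈ St := by
    intro f
    rw [mem_St, smul_smul, ← map_mul, mul_comm, map_mul, ← smul_smul]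
    exact smul_left_cancel_iff _
  have hStiff : ∀ f, f ∈ St ↔ sg d A c f ∈ St := by
    intro f
    constructor
    · intro hf
      rw [← hy2]
      have h1 : (inl (sg d A c f) : WreathProd d A)
          = inr (ofAdd c) * inl f * (inr (ofAdd c))⁻¹ := by
        rw [← map_inv]
        exact SemidirectProduct.inl_aut (ofAdd c) f
      rw [h1, ← smul_smul, ← smul_smul, hyinv, (hy2 f).mpr hf, hy]
    · intro hf
      rw [← hy2]
      have h1 : (inl f : WreathProd d A)
          = (inr (ofAdd c))⁻¹ * inl (sg d A c f) * inr (ofAdd c) := by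
        rw [← map_inv]
        have h2 := SemidirectProduct.inl_aut_inv (φ := wreathShift d A) (ofAdd c) (sg d A c f)
        rw [← h2]
        congr 1
        exact ((sg d A c).symm_apply_apply f).symm
      rw [h1, ← smul_smul, ← smul_smul, hy, (hy2 _).mpr hf, hyinv]
  haveI hStNormal : St.Normal := Subgroup.normal_of_comm St
  have hmap : Subgroup.map ((sg d A c : _ ≃* _) : Multiplicative ((Fin d → ℤ) →₀ A) →* _) St
      = St := by
    ext f
    rw [Subgroup.mem_map]
    constructor
    · rintro ⟨f', hf', rfl⟩
      exact (hStiff f').mp hf'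
    · intro hf
      refine ⟨(sg d A c).symm f, ?_, (sg d A c).apply_symm_apply f⟩
      rw [hStiff ((sg d A c).symm f), (sg d A c).apply_symm_apply]
      exact hf
  set Q₁ := Multiplicative ((Fin d → ℤ) →₀ A) ⧸ St with hQ₁
  set σb : Q₁ ≃* Q₁ := QuotientGroup.congr St St (sg d A c) hmap with hσb
  set Φ : Multiplicative ((Fin d → ℤ) →₀ A) →* Q₁ :=
    (QuotientGroup.mk' St).comp (psi d A c) with hΦ
  have hker : U c ≤ Φ.ker := by
    intro f hf
    have : psi d A c f ∈ St := hf
    rw [MonoidHom.mem_ker, hΦ, MonoidHom.comp_apply]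
    exact (QuotientGroup.eq_one_iff _).mpr this
  have hΓcard_le : Nat.card Φ.range ≤ D.card := by
    have h1 : Φ.ker.index = Nat.card Φ.range := Subgroup.index_ker Φ
    have h2 : Φ.ker.index ∣ (U c).index := Subgroup.index_dvd_of_le hker
    have h3 : (U c).index ≠ 0 := hUFin.index_ne_zero
    have h4 : Φ.ker.index ≤ (U c).index := Nat.le_of_dvd (Nat.pos_of_ne_zero h3) h2
    have h5 : s.card ≤ D.card := Finset.card_filter_le _ _
    omega
  have hΓpos : 0 < Nat.card Φ.range := by
    have h1 : Φ.ker.index = Nat.card Φ.range := Subgroup.index_ker Φ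
    have h2 : Φ.ker.index ∣ (U c).index := Subgroup.index_dvd_of_le hker
    have h3 : (U c).index ≠ 0 := hUFin.index_ne_zero
    have : Φ.ker.index ≠ 0 := by
      intro h0
      rw [h0] at h2
      exact h3 (zero_dvd_iff.mp h2)
    omega
  haveI hΓfin : Finite Φ.range := (Nat.card_pos_iff.mp hΓpos).2
  haveI : Fintype Φ.range := Fintype.ofFinite _
  have hΓf : ∀ γ : Q₁, γ ∈ Φ.range → σb γ ∈ Φ.range := by
    rintro _ ⟨f, rfl⟩
    refine ⟨sg d A c f, ?_⟩
    rw [hΦ, MonoidHom.comp_apply, MonoidHom.comp_apply, ← sg_psi_comm]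
    exact (QuotientGroup.congr_mk' St St (sg d A c) hmap (psi d A c f)).symm
  have hσbsymm : ∀ h : Multiplicative ((Fin d → ℤ) →₀ A),
      σb.symm (QuotientGroup.mk' St h) = QuotientGroup.mk' St ((sg d A c).symm h) := fun h => rfl
  have hΓb : ∀ γ : Q₁, γ ∈ Φ.range → σb.symm γ ∈ Φ.range := by
    rintro _ ⟨f, rfl⟩
    refine ⟨(sg d A c).symm f, ?_⟩
    rw [hΦ, MonoidHom.comp_apply, MonoidHom.comp_apply, ← sg_symm_psi_comm]
    exact (hσbsymm (psi d A c f)).symm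
  set e₀ : Equiv.Perm Φ.range :=
    ⟨fun γ => ⟨σb γ.1, hΓf _ γ.2⟩, fun γ => ⟨σb.symm γ.1, hΓb _ γ.2⟩,
      fun γ => Subtype.ext (σb.symm_apply_apply γ.1),
      fun γ => Subtype.ext (σb.apply_symm_apply γ.1)⟩ with he₀
  have horder : e₀ ^ M = 1 := by
    rw [← orderOf_dvd_iff_pow_eq_one]
    have h1 : orderOf e₀ ∣ Nat.factorial (Fintype.card Φ.range) := by
      have := orderOf_dvd_card (x := e₀)
      rwa [Fintype.card_perm] at this
    refine h1.trans (Nat.factorial_dvd_factorial ?_)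
    rw [← Nat.card_eq_fintype_card]
    exact hΓcard_le
  set W : AddMonoidAlgebra (ZMod p) (Fin d → ℤ) → Q₁ :=
    fun r => Φ (ofAdd (jR p a ha r)) with hW
  have hWmem : ∀ r, W r ∈ Φ.range := fun r => ⟨_, rfl⟩
  have hstep : ∀ r, e₀ ⟨W r, hWmem r⟩ = ⟨W (AddMonoidAlgebra.single c 1 * r), hWmem _⟩ := by
    intro r
    apply Subtype.ext
    show σb (W r) = W (AddMonoidAlgebra.single c 1 * r)
    rw [hW]
    simp only [hΦ, MonoidHom.comp_apply]
    rw [QuotientGroup.congr_mk' St St (sg d A c) hmap, sg_psi_comm, sg_jR]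
  have hiter : ∀ (m : ℕ) (r : AddMonoidAlgebra (ZMod p) (Fin d → ℤ)),
      (e₀ ^ m) ⟨W r, hWmem r⟩ = ⟨W (AddMonoidAlgebra.single (m • c) 1 * r), hWmem _⟩ := by
    intro m
    induction m with
    | zero =>
      intro r
      rw [pow_zero]
      apply Subtype.ext
      show W r = W (AddMonoidAlgebra.single (0 • c) 1 * r)
      rw [zero_smul, ← AddMonoidAlgebra.one_def, one_mul]
    | succ m ih =>
      intro r
      rw [pow_succ, Equiv.Perm.mul_apply, hstep r, ih (AddMonoidAlgebra.single c 1 * r)]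
      apply Subtype.ext
      show W _ = W _
      congr 1
      rw [← mul_assoc, AddMonoidAlgebra.single_mul_single, one_mul, ← succ_nsmul]
  intro r
  have h1 : (e₀ ^ M) ⟨W r, hWmem r⟩ = ⟨W r, hWmem r⟩ := by rw [horder]; rfl
  have h2 := (hiter M r).symm.trans h1
  have h3 : W (AddMonoidAlgebra.single (M • c) 1 * r) = W r := congrArg Subtype.val h2
  rw [hW] at h3
  simp only [hΦ, MonoidHom.comp_apply] at h3
  rw [psi_jR, psi_jR] at h3
  have h4 : (ofAdd (jR p a ha ((1 - AddMonoidAlgebra.single c 1)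
        * (AddMonoidAlgebra.single (M • c) 1 * r))))⁻¹
      * ofAdd (jR p a ha ((1 - AddMonoidAlgebra.single c 1) * r)) ∈ St :=
    QuotientGroup.eq.mp h3
  have h5 : ofAdd (jR p a ha ((1 - AddMonoidAlgebra.single c 1)
      * (1 - AddMonoidAlgebra.single (M • c) 1) * r)) ∈ St := by
    have hre : (1 - AddMonoidAlgebra.single c 1) * (1 - AddMonoidAlgebra.single (M • c) 1) * r
        = (1 - AddMonoidAlgebra.single c 1) * r
          - (1 - AddMonoidAlgebra.single c 1) * (AddMonoidAlgebra.single (M • c) 1 * r) := by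
      ring
    rw [hre, map_sub, ofAdd_sub, div_eq_mul_inv, mul_comm]
    exact h4
  exact (mem_St _).mp h5

lemma one_sub_single_ne_zero (p : ℕ) [Fact p.Prime] (e : Fin d → ℤ) (he : e ≠ 0) :
    (1 : AddMonoidAlgebra (ZMod p) (Fin d → ℤ)) - AddMonoidAlgebra.single e 1 ≠ 0 := by
  haveI : Fact (1 < p) := ⟨(Fact.out : p.Prime).one_lt⟩
  intro h
  have h1 : AddMonoidAlgebra.single e (1 : ZMod p) = AddMonoidAlgebra.single 0 1 := by
    rw [← AddMonoidAlgebra.one_def]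
    exact (sub_eq_zero.mp h).symm
  rcases AddMonoidAlgebra.single_inj.mp h1 with ⟨he0, _⟩ | ⟨h10, _⟩
  · exact he he0
  · exact one_ne_zero h10

lemma main_escape (X : Type*) [MulAction (WreathProd d A) X]
    [FaithfulSMul (WreathProd d A) X] [Finite A] [Nontrivial A]
    (D : Finset (Fin d → ℤ)) (hD : (0 : Fin d → ℤ) ∉ D) :
    ∃ x : X, ∀ c ∈ D, (inr (ofAdd c) : WreathProd d A) • x ≠ x := by
  classical
  by_contra hcon
  push_neg at hcon
  haveI : Fintype A := Fintype.ofFinite A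
  obtain ⟨p, hp, hpdvd⟩ := Nat.exists_prime_and_dvd (Fintype.one_lt_card (α := A)).ne'
  haveI : Fact p.Prime := ⟨hp⟩
  haveI : Fact (1 < p) := ⟨hp.one_lt⟩
  obtain ⟨a, hord⟩ := exists_prime_addOrderOf_dvd_card p hpdvd
  have ha : zmultiplesHom A a (p : ℤ) = 0 := by
    have h1 : p • a = 0 := by rw [← hord]; exact addOrderOf_nsmul_eq_zero a
    have : ((p : ℤ)) • a = p • a := natCast_zsmul a p
    rw [zmultiplesHom_apply, this, h1]
  set ρ : (Fin d → ℤ) → AddMonoidAlgebra (ZMod p) (Fin d → ℤ) := fun c =>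
    (1 - AddMonoidAlgebra.single c 1)
      * (1 - AddMonoidAlgebra.single (Nat.factorial D.card • c) 1) with hρ
  set h₀ : AddMonoidAlgebra (ZMod p) (Fin d → ℤ) := ∏ c ∈ D, ρ c with hh₀
  have htriv : ∀ y : X, (inl (ofAdd (jR p a ha h₀)) : WreathProd d A) • y = y := by
    intro y
    obtain ⟨c, hcD, hc⟩ := key d A p a ha X D hcon y
    have hsplit : h₀ = ρ c * ∏ c' ∈ D.erase c, ρ c' := (Finset.mul_prod_erase D ρ hcD).symm
    rw [hsplit, hρ]
    exact hc _
  have heq : (inl (ofAdd (jR p a ha h₀)) : WreathProd d A) = 1 :=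
    eq_of_smul_eq_smul (fun y => by rw [htriv y, one_smul])
  have h1 : ofAdd (jR p a ha h₀) = (1 : Multiplicative ((Fin d → ℤ) →₀ A)) :=
    SemidirectProduct.inl_injective (by rw [heq, map_one])
  have h2 : jR p a ha h₀ = 0 := h1
  have h3 : h₀ = 0 := jR_inj p a ha hord (by rw [h2, map_zero])
  have hne : h₀ ≠ 0 := by
    rw [hh₀, Finset.prod_ne_zero_iff]
    intro c hc
    have hc0 : c ≠ 0 := fun h => hD (h ▸ hc)
    apply mul_ne_zero
    · exact one_sub_single_ne_zero d p c hc0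
    · refine one_sub_single_ne_zero d p _ ?_
      intro hMc
      apply hc0
      funext i
      have h1 := congrFun hMc i
      rw [Pi.smul_apply] at h1
      have h2 : (Nat.factorial D.card : ℤ) * c i = 0 := by rwa [nsmul_eq_mul] at h1
      have h3 : (Nat.factorial D.card : ℤ) ≠ 0 := Int.natCast_ne_zero.mpr (Nat.factorial_ne_zero _)
      have := (mul_eq_zero.mp h2).resolve_left h3
      rw [this]
      rfl
  exact hne h3
end pmain
end WreathPf
end main

namespace WreathPf

section ball
variable {G : Type*} [Group G]

lemma one_mem_wordBall (S : Set G) (n : ℕ) : (1 : G) ∈ wordBall S n :=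
  ⟨[], by simp, by simp, rfl⟩

lemma wordBall_mono (S : Set G) {m n : ℕ} (h : m ≤ n) : wordBall S m ⊆ wordBall S n := by
  rintro g ⟨l, hl, hmem, rfl⟩
  exact ⟨l, hl.trans h, hmem, rfl⟩

lemma mul_mem_wordBall {S : Set G} {g h : G} {m n : ℕ}
    (hg : g ∈ wordBall S m) (hh : h ∈ wordBall S n) : g * h ∈ wordBall S (m + n) := by
  obtain ⟨l, hl, hmem, rfl⟩ := hg
  obtain ⟨l', hl', hmem', rfl⟩ := hh
  exact ⟨l ++ l', by simp; omega, by
    intro s hs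
    rcases List.mem_append.mp hs with h | h
    exacts [hmem s h, hmem' s h], by rw [List.prod_append]⟩

lemma inv_mem_wordBall {S : Set G} (hsym : ∀ s ∈ S, s⁻¹ ∈ S) {g : G} {n : ℕ}
    (hg : g ∈ wordBall S n) : g⁻¹ ∈ wordBall S n := by
  obtain ⟨l, hl, hmem, rfl⟩ := hg
  refine ⟨(l.map (fun x => x⁻¹)).reverse, by simp [hl], ?_, (List.prod_inv_reverse l).symm⟩
  intro s hs
  rw [List.mem_reverse, List.mem_map] at hs
  obtain ⟨t, ht, rfl⟩ := hs
  exact hsym t (hmem t ht)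

lemma pow_mem_wordBall {S : Set G} {g : G} {n : ℕ} (hg : g ∈ wordBall S n) (m : ℕ) :
    g ^ m ∈ wordBall S (m * n) := by
  induction m with
  | zero => simpa using one_mem_wordBall S 0
  | succ m ih =>
      have := mul_mem_wordBall ih hg
      rw [← pow_succ] at this
      have heq : m * n + n = (m + 1) * n := by ring
      rw [heq] at this
      exact this

lemma zpow_mem_wordBall {S : Set G} (hsym : ∀ s ∈ S, s⁻¹ ∈ S) {g : G} {n : ℕ}
    (hg : g ∈ wordBall S n) (z : ℤ) : g ^ z ∈ wordBall S (z.natAbs * n) := by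
  have hres : (g ^ (z.natAbs : ℤ)) ∈ wordBall S (z.natAbs * n) := by
    rw [zpow_natCast]
    exact pow_mem_wordBall hg _
  rcases Int.natAbs_eq z with h | h
  · rw [← h] at hres
    exact hres
  · have heq : g ^ z = (g ^ (z.natAbs : ℤ))⁻¹ := by rw [← zpow_neg, ← h]
    rw [heq]
    exact inv_mem_wordBall hsym hres

lemma wordBall_finite {S : Set G} (hS : S.Finite) (n : ℕ) : (wordBall S n).Finite := by
  induction n with
  | zero =>
      apply Set.Finite.subset (Set.finite_singleton (1 : G))
      rintro g ⟨l, hl, hmem, rfl⟩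
      rw [Nat.le_zero, List.length_eq_zero_iff] at hl
      simp [hl]
  | succ n ih =>
      have hsub : wordBall S (n + 1) ⊆
          wordBall S n ∪ ⋃ s ∈ S, (fun t => s * t) '' wordBall S n := by
        rintro g ⟨l, hl, hmem, rfl⟩
        cases l with
        | nil => exact Or.inl (one_mem_wordBall S n)
        | cons a t =>
            refine Or.inr (Set.mem_biUnion (hmem a (by simp)) ?_)
            refine ⟨t.prod, ⟨t, ?_, fun s hs => hmem s (by simp [hs]), rfl⟩, by simp⟩
            simpa using hl
      exact Set.Finite.subset (ih.union (hS.biUnion (fun s _ => ih.image _))) hsub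

lemma exists_wordBall_of_closure {S : Set G} (hsym : ∀ s ∈ S, s⁻¹ ∈ S)
    (hcl : Subgroup.closure S = ⊤) (g : G) : ∃ n, g ∈ wordBall S n := by
  set K : Subgroup G :=
    { carrier := {g | ∃ n, g ∈ wordBall S n}
      one_mem' := ⟨0, one_mem_wordBall S 0⟩
      mul_mem' := by
        rintro a b ⟨m, hm⟩ ⟨n, hn⟩
        exact ⟨m + n, mul_mem_wordBall hm hn⟩
      inv_mem' := by
        rintro a ⟨m, hm⟩
        exact ⟨m, inv_mem_wordBall hsym hm⟩ } with hK
  have hle : Subgroup.closure S ≤ K := by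
    rw [Subgroup.closure_le]
    intro s hs
    exact ⟨1, ⟨[s], by simp, by simpa using hs, by simp⟩⟩
  have : g ∈ K := hle (hcl ▸ Subgroup.mem_top g)
  exact this

end ball
end WreathPf

namespace WreathPf
open SemidirectProduct Multiplicative

section glue
variable (d : ℕ) (A : Type*) [AddCommGroup A] [Finite A] [Nontrivial A]

lemma inr_box_mem {S : Set (WreathProd d A)} (hsym : ∀ s ∈ S, s⁻¹ ∈ S) (m : Fin d → ℕ)
    (hm : ∀ i, (inr (ofAdd (Pi.single i 1)) : WreathProd d A) ∈ wordBall S (m i))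
    (q : Fin d → ℤ) :
    (inr (ofAdd q) : WreathProd d A) ∈ wordBall S (∑ i, (q i).natAbs * m i) := by
  classical
  have key : ∀ t : Finset (Fin d),
      (inr (ofAdd (∑ i ∈ t, Pi.single i (q i))) : WreathProd d A)
        ∈ wordBall S (∑ i ∈ t, (q i).natAbs * m i) := by
    intro t
    induction t using Finset.induction_on with
    | empty => simpa using one_mem_wordBall S 0
    | @insert a t' hnot ih =>
        rw [Finset.sum_insert hnot, Finset.sum_insert hnot, ofAdd_add, map_mul]
        refine mul_mem_wordBall ?_ ih
        have h1 : (Pi.single a (q a) : Fin d → ℤ) = (q a) • (Pi.single a (1 : ℤ) : Fin d → ℤ) := by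
          rw [← Pi.single_smul, smul_eq_mul, mul_one]
        rw [h1, ofAdd_zsmul, map_zpow]
        exact zpow_mem_wordBall hsym (hm a) (q a)
  have h2 := key Finset.univ
  rwa [Finset.univ_sum_single] at h2

lemma nonfoldable : NonFoldableSubset
    (Set.range (fun q : Multiplicative (Fin d → ℤ) =>
      (SemidirectProduct.inr q : WreathProd d A))) := by
  intro X _ _ _ s hsub hfin
  classical
  set s₁ : Set (Multiplicative (Fin d → ℤ)) :=
    (fun q => (inr q : WreathProd d A)) ⁻¹' s with hs₁
  have hs₁fin : s₁.Finite := hfin.preimage (Set.injOn_of_injective inr_injective)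
  set Dset : Set (Fin d → ℤ) :=
    (fun pq : Multiplicative (Fin d → ℤ) × Multiplicative (Fin d → ℤ) =>
      toAdd pq.1 - toAdd pq.2) '' ((s₁ ×ˢ s₁) ∩ {pq | pq.1 ≠ pq.2}) with hDset
  have hDfin : Dset.Finite := ((hs₁fin.prod hs₁fin).inter_of_left _).image _
  have hD0 : (0 : Fin d → ℤ) ∉ hDfin.toFinset := by
    rw [Set.Finite.mem_toFinset]
    rintro ⟨⟨q1, q2⟩, ⟨-, hne⟩, heq⟩
    apply hne
    have h1 : toAdd q1 = toAdd q2 := sub_eq_zero.mp heq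
    exact toAdd.injective h1
  obtain ⟨x, hx⟩ := main_escape d A X hDfin.toFinset hD0
  refine ⟨x, ?_⟩
  intro g hg h hh heq
  obtain ⟨qg, rfl⟩ := hsub hg
  obtain ⟨qh, rfl⟩ := hsub hh
  by_contra hne'
  have hqne : qg ≠ qh := fun hq => hne' (by rw [hq])
  have hmemD : toAdd qg - toAdd qh ∈ Dset := ⟨(qg, qh), ⟨⟨hg, hh⟩, hqne⟩, rfl⟩
  have heq' : (inr qg : WreathProd d A) • x = (inr qh : WreathProd d A) • x := heq
  have hfix : (inr (ofAdd (toAdd qg - toAdd qh)) : WreathProd d A) • x = x := by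
    have h1 : ofAdd (toAdd qg - toAdd qh) = qh⁻¹ * qg := by
      rw [ofAdd_sub, ofAdd_toAdd, ofAdd_toAdd, div_eq_mul_inv, mul_comm]
    rw [h1, map_mul, map_inv, ← smul_smul, heq', inv_smul_smul]
  exact hx _ (hDfin.mem_toFinset.mpr hmemD) hfix

lemma growthgap : SchreierGrowthGap (WreathProd d A) (fun n => (n : ℝ) ^ d) := by
  intro S hSfin hsym hcl X _ _ _
  classical
  have hgen : ∀ i : Fin d, ∃ k, (inr (ofAdd (Pi.single i 1)) : WreathProd d A) ∈ wordBall S k :=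
    fun i => exists_wordBall_of_closure hsym hcl _
  choose m hm using hgen
  set m₀ : ℕ := (Finset.univ.sup m) + 1 with hm₀
  set C : ℕ := d * m₀ + 1 with hC
  refine ⟨C, by omega, ?_⟩
  intro n hn
  set Bx : Finset (Fin d → ℤ) :=
    Fintype.piFinset (fun _ : Fin d => Finset.Ico (0 : ℤ) (n : ℤ)) with hBx
  have hBxcard : Bx.card = n ^ d := by
    rw [hBx, Fintype.card_piFinset]
    simp [Int.card_Ico]
  have hball : ∀ q ∈ Bx, (inr (ofAdd q) : WreathProd d A) ∈ wordBall S (C * n) := by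
    intro q hq
    have h1 := inr_box_mem d A hsym m hm q
    refine wordBall_mono S ?_ h1
    have hq' : ∀ i, (0 : ℤ) ≤ q i ∧ q i < n := by
      intro i
      have := (Fintype.mem_piFinset.mp hq) i
      simpa [Finset.mem_Ico] using this
    have hterm : ∀ i : Fin d, (q i).natAbs * m i ≤ n * m₀ := by
      intro i
      apply Nat.mul_le_mul
      · have h0 := (hq' i).1
        have h2 := (hq' i).2
        omega
      · have : m i ≤ Finset.univ.sup m := Finset.le_sup (Finset.mem_univ i)
        omega
    calc ∑ i, (q i).natAbs * m i ≤ ∑ _i : Fin d, n * m₀ := Finset.sum_le_sum (fun i _ => hterm i)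
      _ = d * (n * m₀) := by rw [Finset.sum_const, Finset.card_univ, Fintype.card_fin, smul_eq_mul]
      _ ≤ C * n := by rw [hC]; ring_nf; nlinarith [hn]
  set sset : Set (WreathProd d A) :=
    (fun q : Multiplicative (Fin d → ℤ) => (inr q : WreathProd d A)) '' (ofAdd '' ↑Bx) with hsset
  have hssub : sset ⊆ Set.range (fun q : Multiplicative (Fin d → ℤ) =>
      (SemidirectProduct.inr q : WreathProd d A)) := by
    rintro _ ⟨q, -, rfl⟩
    exact ⟨q, rfl⟩
  have hsfin : sset.Finite := ((Bx.finite_toSet.image _).image _)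
  obtain ⟨x, hx⟩ := nonfoldable d A X sset hssub hsfin
  have hcard1 : sset.ncard = n ^ d := by
    rw [hsset, Set.ncard_image_of_injOn (Set.injOn_of_injective inr_injective),
      Set.ncard_image_of_injOn (Set.injOn_of_injective (Multiplicative.ofAdd.injective)),
      Set.ncard_coe_finset, hBxcard]
  have hcard2 : ((fun g : WreathProd d A => g • x) '' sset).ncard = n ^ d := by
    rw [Set.ncard_image_of_injOn hx, hcard1]
  have hfinball : (wordBall S (C * n)).Finite := wordBall_finite hSfin _
  have hsubset : (fun g : WreathProd d A => g • x) '' sset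
      ⊆ (fun g : WreathProd d A => g • x) '' wordBall S (C * n) := by
    apply Set.image_mono
    rintro _ ⟨q, ⟨q₀, hq₀, rfl⟩, rfl⟩
    exact hball q₀ hq₀
  have hle1 : n ^ d ≤ ((fun g : WreathProd d A => g • x) '' wordBall S (C * n)).ncard := by
    rw [← hcard2]
    exact Set.ncard_le_ncard hsubset (hfinball.image _)
  have hbdd : BddAbove (Set.range fun y : X =>
      ((fun g : WreathProd d A => g • y) '' wordBall S (C * n)).ncard) := by
    refine ⟨(wordBall S (C * n)).ncard, ?_⟩
    rintro _ ⟨y, rfl⟩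
    exact Set.ncard_image_le hfinball
  have hle2 : n ^ d ≤ actionGrowth (WreathProd d A) X S (C * n) :=
    le_trans hle1 (le_ciSup hbdd x)
  have hcast : ((n : ℝ)) ^ d = ((n ^ d : ℕ) : ℝ) := by push_cast; ring
  show ((n : ℝ)) ^ d ≤ (C : ℝ) * (actionGrowth (WreathProd d A) X S (C * n) : ℝ)
  rw [hcast]
  calc ((n ^ d : ℕ) : ℝ) ≤ (actionGrowth (WreathProd d A) X S (C * n) : ℝ) :=
        Nat.cast_le.mpr hle2
    _ ≤ (C : ℝ) * (actionGrowth (WreathProd d A) X S (C * n) : ℝ) := by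
        refine le_mul_of_one_le_left (Nat.cast_nonneg _) ?_
        rw [hC]
        push_cast
        nlinarith [Nat.cast_nonneg (α := ℝ) (d * m₀)]

end glue
end WreathPf

/-- For `d ≥ 1` and a nontrivial finite abelian group `A`, the canonical copy
of `ℤ^d` in the wreath product `G = A ≀ ℤ^d` is a non-foldable subset of `G`, and `G` has a
Schreier growth gap `n^d`. -/
theorem wreath_finite_nonfoldable_base (d : ℕ) (hd : 1 ≤ d)
    (A : Type*) [AddCommGroup A] [Finite A] [Nontrivial A] :
    NonFoldableSubset
      (Set.range (fun q : Multiplicative (Fin d → ℤ) =>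
        (SemidirectProduct.inr q : WreathProd d A))) ∧
    SchreierGrowthGap (WreathProd d A) (fun n => (n : ℝ) ^ d) := by
  exact ⟨WreathPf.nonfoldable d A, WreathPf.growthgap d A⟩
end

section
/- Let G be a group with a nilpotent normal subgroup N, and let Q = G/N. Let V = N^{ab} ⊗_ℤ ℚ, where N^{ab} is the abelianization of N; assume V is a nonzero finite-dimensional ℚ-vector space, and let ρ : Q → GL(V) be the linear representation induced by the conjugation action of G on N (inner automorphisms of N act trivially on N^{ab}, so this action factors through Q). Assume ρ is strongly irreducible: for every finite-index subgroup Q₀ of Q, the only ρ(Q₀)-invariant ℚ-subspaces of V are 0 and V. Let L be a subset of N such that the induced map from L to N^{ab}/T(N^{ab}) (the abelianization of N modulo its torsion subgroup) is injective. Then L is a non-foldable subset of G. -/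
open scoped commutatorElement

section CommHelpers

variable {Γ : Type*} [Group Γ]

private lemma comm_central_left {z : Γ} (hz : ∀ g, Commute z g) (a c : Γ) :
    ⁅z * a, c⁆ = ⁅a, c⁆ := by
  simp only [commutatorElement_def, mul_inv_rev]
  have h1 : z * (a * c * a⁻¹) = a * c * a⁻¹ * z := (hz _).eq
  calc z * a * c * (a⁻¹ * z⁻¹) * c⁻¹ = z * (a * c * a⁻¹) * z⁻¹ * c⁻¹ := by group
    _ = a * c * a⁻¹ * z * z⁻¹ * c⁻¹ := by rw [h1]
    _ = a * c * a⁻¹ * c⁻¹ := by group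

private lemma comm_central_right {z : Γ} (hz : ∀ g, Commute z g) (a c : Γ) :
    ⁅a, z * c⁆ = ⁅a, c⁆ := by
  simp only [commutatorElement_def, mul_inv_rev]
  have h1 : z * (c * a⁻¹ * c⁻¹) = c * a⁻¹ * c⁻¹ * z := (hz _).eq
  calc a * (z * c) * a⁻¹ * (c⁻¹ * z⁻¹)
      = a * (z * (c * a⁻¹ * c⁻¹)) * z⁻¹ := by group
    _ = a * (c * a⁻¹ * c⁻¹ * z) * z⁻¹ := by rw [h1]
    _ = a * c * a⁻¹ * c⁻¹ := by group

/-- If all commutators with first entry in `A` are central, commutators are "bilinear". -/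
private lemma comm_mul_right (A : Subgroup Γ)
    (hcent : ∀ p ∈ A, ∀ g h : Γ, Commute ⁅p, g⁆ h)
    {p : Γ} (hp : p ∈ A) (g₁ g₂ : Γ) : ⁅p, g₁ * g₂⁆ = ⁅p, g₁⁆ * ⁅p, g₂⁆ := by
  have key : ⁅p, g₁ * g₂⁆ = ⁅p, g₁⁆ * (g₁ * ⁅p, g₂⁆ * g₁⁻¹) := by
    simp only [commutatorElement_def]; group
  have hc : g₁ * ⁅p, g₂⁆ * g₁⁻¹ = ⁅p, g₂⁆ := by
    rw [(hcent p hp g₂ g₁).symm.eq]; group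
  rw [key, hc]

private lemma comm_pow_right (A : Subgroup Γ)
    (hcent : ∀ p ∈ A, ∀ g h : Γ, Commute ⁅p, g⁆ h)
    {p : Γ} (hp : p ∈ A) (g : Γ) : ∀ j : ℕ, ⁅p, g ^ j⁆ = ⁅p, g⁆ ^ j := by
  intro j
  induction j with
  | zero => simp [commutatorElement_def]
  | succ j ih => rw [pow_succ, comm_mul_right A hcent hp, ih, ← pow_succ]

private lemma comm_mul_left (A : Subgroup Γ)
    (hcent : ∀ p ∈ A, ∀ g h : Γ, Commute ⁅p, g⁆ h)
    {p₁ p₂ : Γ} (hp₁ : p₁ ∈ A) (hp₂ : p₂ ∈ A) (g : Γ) :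
    ⁅p₁ * p₂, g⁆ = ⁅p₁, g⁆ * ⁅p₂, g⁆ := by
  have key : ⁅p₁ * p₂, g⁆ = (p₁ * ⁅p₂, g⁆ * p₁⁻¹) * ⁅p₁, g⁆ := by
    simp only [commutatorElement_def]; group
  have hc : p₁ * ⁅p₂, g⁆ * p₁⁻¹ = ⁅p₂, g⁆ := by
    rw [(hcent p₂ hp₂ g p₁).symm.eq]; group
  rw [key, hc, (hcent p₂ hp₂ g ⁅p₁, g⁆).eq]

private lemma comm_pow_pow (A : Subgroup Γ)
    (hcent : ∀ p ∈ A, ∀ g h : Γ, Commute ⁅p, g⁆ h)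
    {p : Γ} (hp : p ∈ A) (g : Γ) (i j : ℕ) :
    ⁅p ^ i, g ^ j⁆ = ⁅p, g⁆ ^ (i * j) := by
  have hleft : ∀ i : ℕ, ⁅p ^ i, g⁆ = ⁅p, g⁆ ^ i := by
    intro i
    induction i with
    | zero => simp [commutatorElement_def]
    | succ i ih =>
        rw [pow_succ', comm_mul_left A hcent hp (pow_mem hp i), ih, ← pow_succ']
  rw [comm_pow_right A hcent (pow_mem hp i), hleft, ← pow_mul]

end CommHelpers

section IotaHelpers

variable {Nn : Type*} [Group Nn] {V : Type*} [AddCommGroup V] [Module ℚ V]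
variable {ι : Nn → V}

private lemma iota_one (hι : ∀ a b : Nn, ι (a * b) = ι a + ι b) : ι 1 = 0 := by
  have h := hι 1 1
  rw [mul_one] at h
  have h2 : ι 1 + ι 1 = ι 1 + 0 := by rw [add_zero]; exact h.symm
  exact (add_left_cancel h2)

private lemma iota_inv (hι : ∀ a b : Nn, ι (a * b) = ι a + ι b) (a : Nn) :
    ι a⁻¹ = -ι a := by
  have h := hι a a⁻¹
  rw [mul_inv_cancel, iota_one hι] at h
  exact eq_neg_of_add_eq_zero_right h.symm

private lemma iota_pow (hι : ∀ a b : Nn, ι (a * b) = ι a + ι b) (a : Nn) (j : ℕ) :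
    ι (a ^ j) = (j : ℚ) • ι a := by
  induction j with
  | zero => simp [iota_one hι]
  | succ j ih =>
      rw [pow_succ, hι, ih]
      push_cast
      module

private lemma iota_zpow (hι : ∀ a b : Nn, ι (a * b) = ι a + ι b) (a : Nn) (c : ℤ) :
    ι (a ^ c) = (c : ℚ) • ι a := by
  rcases c with p | p
  · simp only [Int.ofNat_eq_coe, zpow_natCast, iota_pow hι]; norm_num
  · rw [zpow_negSucc, iota_inv hι, iota_pow hι]
    push_cast
    module

end IotaHelpers

section Isolator

variable {Nn : Type*} [Group Nn] {V : Type*} [AddCommGroup V] [Module ℚ V]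

/-- Key nilpotency lemma: if the image of a subgroup `M` under `ι` spans `V`
(`ι` being the "abelianization mod torsion" map), then every element of the
nilpotent group has a positive power inside `M`. -/
private lemma isolator [hnil : Group.IsNilpotent Nn]
    (ι : Nn → V) (hι : ∀ a b : Nn, ι (a * b) = ι a + ι b)
    (hker : ∀ m : Nn, ι m = 0 → ∃ j : ℕ, 0 < j ∧ m ^ j ∈ commutator Nn)
    (M : Subgroup Nn) (hspanM : Submodule.span ℚ (ι '' (M : Set Nn)) = ⊤) :
    ∀ n : Nn, ∃ j : ℕ, 0 < j ∧ n ^ j ∈ M := by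
  classical
  -- Step A: clear denominators
  have hR : ∀ v : V, ∃ j : ℕ, 0 < j ∧ ∃ m ∈ M, (j : ℚ) • v = ι m := by
    intro v
    let R : Submodule ℚ V :=
      { carrier := {v | ∃ j : ℕ, 0 < j ∧ ∃ m ∈ M, (j : ℚ) • v = ι m}
        add_mem' := by
          rintro v₁ v₂ ⟨j₁, hj₁, m₁, hm₁, he₁⟩ ⟨j₂, hj₂, m₂, hm₂, he₂⟩
          refine ⟨j₁ * j₂, Nat.mul_pos hj₁ hj₂, m₁ ^ j₂ * m₂ ^ j₁, mul_mem (pow_mem hm₁ _) (pow_mem hm₂ _), ?_⟩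
          rw [hι, iota_pow hι, iota_pow hι, ← he₁, ← he₂]
          push_cast
          module
        zero_mem' := ⟨1, one_pos, 1, one_mem M, by rw [iota_one hι]; module⟩
        smul_mem' := by
          rintro q v ⟨j, hj, m, hm, he⟩
          refine ⟨j * q.den, Nat.mul_pos hj q.pos, m ^ q.num, zpow_mem hm _, ?_⟩
          rw [iota_zpow hι, ← he]
          have hden : (q.den : ℚ) * q = (q.num : ℚ) := by
            rw [mul_comm]
            exact_mod_cast Rat.mul_den_eq_num q
          push_cast
          rw [smul_smul, smul_smul]
          congr 1
          linear_combination (j : ℚ) * hden }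
    have hle : Submodule.span ℚ (ι '' (M : Set Nn)) ≤ R := by
      rw [Submodule.span_le]
      rintro _ ⟨m, hm, rfl⟩
      exact ⟨1, one_pos, m, hm, by norm_num⟩
    rw [hspanM] at hle
    exact hle Submodule.mem_top
  -- Step B: the kernel description
  have H1 : ∀ n : Nn, ∃ j : ℕ, 0 < j ∧ ∃ m ∈ M, ∃ i : ℕ, 0 < i ∧
      (n ^ j * m⁻¹) ^ i ∈ commutator Nn := by
    intro n
    obtain ⟨j, hj, m, hm, he⟩ := hR (ι n)
    refine ⟨j, hj, m, hm, ?_⟩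
    have h0 : ι (n ^ j * m⁻¹) = 0 := by
      rw [hι, iota_inv hι, iota_pow hι, he]
      abel
    exact hker _ h0
  -- Step C: induction along the lower central series
  have key : ∀ k : ℕ, ∀ n : Nn, ∃ j : ℕ, 0 < j ∧ ∃ m ∈ M,
      n ^ j * m⁻¹ ∈ (⊤ : Subgroup Nn).lowerCentralSeries (k + 1) := by
    intro k
    induction k with
    | zero =>
      intro n
      obtain ⟨j, hj, m, hm, i, hi, hcom⟩ := H1 n
      set K := (⊤ : Subgroup Nn).lowerCentralSeries 1 with hK
      let π := QuotientGroup.mk' K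
      have hone : ∀ x : Nn, π x = 1 ↔ x ∈ K := fun x => by
        rw [QuotientGroup.mk'_apply, QuotientGroup.eq_one_iff]
      have heq2 : ∀ x y : Nn, (π x = π y) ↔ x * y⁻¹ ∈ K := by
        intro x y
        rw [← hone, map_mul, map_inv, mul_inv_eq_one]
      have hcomm : ∀ x y : Nn, Commute (π x) (π y) := by
        intro x y
        rw [← commutatorElement_eq_one_iff_commute, ← map_commutatorElement, hone, hK,
          lowerCentralSeries_one, commutator_def]
        exact Subgroup.commutator_mem_commutator (Subgroup.mem_top x) (Subgroup.mem_top y)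
      refine ⟨j * i, Nat.mul_pos hj hi, m ^ i, pow_mem hm i, ?_⟩
      rw [← heq2]
      have hx : π ((n ^ j * m⁻¹) ^ i) = 1 := by
        rw [hone, hK, lowerCentralSeries_one]
        exact hcom
      rw [map_pow, map_mul, map_inv, Commute.mul_pow ((hcomm (n ^ j) m).inv_right),
        map_pow, inv_pow, mul_inv_eq_one, ← pow_mul] at hx
      rw [map_pow, map_pow]
      exact hx
    | succ k ih =>
      intro n
      obtain ⟨j, hj, m, hm, hz⟩ := ih n
      set K := (⊤ : Subgroup Nn).lowerCentralSeries (k + 2) with hK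
      let π := QuotientGroup.mk' K
      have hone : ∀ x : Nn, π x = 1 ↔ x ∈ K := fun x => by
        rw [QuotientGroup.mk'_apply, QuotientGroup.eq_one_iff]
      have heq2 : ∀ x y : Nn, (π x = π y) ↔ x * y⁻¹ ∈ K := by
        intro x y
        rw [← hone, map_mul, map_inv, mul_inv_eq_one]
      -- elements of lcs (k+1) become central in the quotient
      have hcentQ : ∀ x ∈ (⊤ : Subgroup Nn).lowerCentralSeries (k + 1), ∀ g : Nn ⧸ K, Commute (π x) g := by
        intro x hx g
        induction g using QuotientGroup.induction_on with
        | H y =>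
          show Commute (π x) (π y)
          rw [← commutatorElement_eq_one_iff_commute, ← map_commutatorElement, hone, hK,
            Subgroup.mem_lowerCentralSeries_succ_iff _ (k + 1)]
          exact Subgroup.subset_closure
            ⟨x, hx, y, Subgroup.mem_top y, (commutatorElement_def x y).symm⟩
      -- the image of lcs k, whose commutators are central
      set A : Subgroup (Nn ⧸ K) := ((⊤ : Subgroup Nn).lowerCentralSeries k).map π with hA
      have hcentA : ∀ p ∈ A, ∀ g h : Nn ⧸ K, Commute ⁅p, g⁆ h := by
        intro p hp g h
        obtain ⟨p₀, hp₀, rfl⟩ := hp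
        induction g using QuotientGroup.induction_on with
        | H y =>
          have hin : ⁅p₀, y⁆ ∈ (⊤ : Subgroup Nn).lowerCentralSeries (k + 1) := by
            rw [Subgroup.mem_lowerCentralSeries_succ_iff _ k]
            exact Subgroup.subset_closure
              ⟨p₀, hp₀, y, Subgroup.mem_top y, (commutatorElement_def p₀ y).symm⟩
          have : (⁅π p₀, (y : Nn ⧸ K)⁆ : Nn ⧸ K) = π ⁅p₀, y⁆ := (map_commutatorElement π p₀ y).symm
          rw [this]
          exact hcentQ _ hin h
      -- every element of lcs (k+1) has a positive power in M modulo K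
      have hmemc : ∀ w : Nn, w ∈ Subgroup.closure
          {x | ∃ p ∈ (⊤ : Subgroup Nn).lowerCentralSeries k, ∃ q ∈ (⊤ : Subgroup Nn), p * q * p⁻¹ * q⁻¹ = x} →
          w ∈ (⊤ : Subgroup Nn).lowerCentralSeries (k + 1) := by
        intro w hw
        rw [Subgroup.mem_lowerCentralSeries_succ_iff _ k]
        exact hw
      have Cgen : ∀ z' ∈ (⊤ : Subgroup Nn).lowerCentralSeries (k + 1), ∃ i : ℕ, 0 < i ∧ ∃ mm ∈ M,
          z' ^ i * mm⁻¹ ∈ K := by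
        intro z' hz'
        rw [Subgroup.mem_lowerCentralSeries_succ_iff _ k] at hz'
        induction hz' using Subgroup.closure_induction with
        | mem x hx =>
          obtain ⟨p, hp, q, -, rfl⟩ := hx
          obtain ⟨a, ha, m₁, hm₁, hu⟩ := ih p
          obtain ⟨b, hb, m₂, hm₂, hw⟩ := ih q
          have hxc : p * q * p⁻¹ * q⁻¹ = ⁅p, q⁆ := (commutatorElement_def p q).symm
          refine ⟨a * b, Nat.mul_pos ha hb, ⁅m₁, m₂⁆, ?_, ?_⟩
          · rw [commutatorElement_def]
            exact mul_mem (mul_mem (mul_mem hm₁ hm₂) (inv_mem hm₁)) (inv_mem hm₂)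
          rw [← heq2]
          -- π (⁅p,q⁆ ^ (a*b)) = π ⁅m₁, m₂⁆
          have hpa : π (p ^ a) = π (p ^ a * m₁⁻¹) * π m₁ := by
            rw [← map_mul, inv_mul_cancel_right]
          have hqb : π (q ^ b) = π (q ^ b * m₂⁻¹) * π m₂ := by
            rw [← map_mul, inv_mul_cancel_right]
          have hpA : π p ∈ A := Subgroup.mem_map_of_mem π hp
          calc π (⁅p, q⁆ ^ (a * b)) = ⁅π p, π q⁆ ^ (a * b) := by
                rw [map_pow, map_commutatorElement]
            _ = ⁅(π p) ^ a, (π q) ^ b⁆ := (comm_pow_pow A hcentA hpA (π q) a b).symm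
            _ = ⁅π (p ^ a), π (q ^ b)⁆ := by rw [map_pow, map_pow]
            _ = ⁅π (p ^ a * m₁⁻¹) * π m₁, π (q ^ b * m₂⁻¹) * π m₂⁆ := by rw [← hpa, ← hqb]
            _ = ⁅π m₁, π (q ^ b * m₂⁻¹) * π m₂⁆ := comm_central_left (hcentQ _ hu) _ _
            _ = ⁅π m₁, π m₂⁆ := comm_central_right (hcentQ _ hw) _ _
            _ = π ⁅m₁, m₂⁆ := (map_commutatorElement π m₁ m₂).symm
        | one => exact ⟨1, one_pos, 1, one_mem M, by simpa using one_mem K⟩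
        | mul x y hx hy ihx ihy =>
          obtain ⟨i₁, hi₁, m₁, hm₁, h₁⟩ := ihx
          obtain ⟨i₂, hi₂, m₂, hm₂, h₂⟩ := ihy
          refine ⟨i₁ * i₂, Nat.mul_pos hi₁ hi₂, m₁ ^ i₂ * m₂ ^ i₁,
            mul_mem (pow_mem hm₁ _) (pow_mem hm₂ _), ?_⟩
          rw [← heq2] at h₁ h₂ ⊢
          have e1 : (π x) ^ (i₁ * i₂) = (π (x ^ i₁)) ^ i₂ := by rw [map_pow, ← pow_mul]
          have e2 : (π y) ^ (i₁ * i₂) = (π (y ^ i₂)) ^ i₁ := by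
            rw [map_pow, ← pow_mul, mul_comm]
          calc π ((x * y) ^ (i₁ * i₂)) = (π x * π y) ^ (i₁ * i₂) := by
                rw [map_pow, map_mul]
            _ = (π x) ^ (i₁ * i₂) * (π y) ^ (i₁ * i₂) :=
                Commute.mul_pow (hcentQ x (hmemc x hx) (π y)) _
            _ = (π (x ^ i₁)) ^ i₂ * (π (y ^ i₂)) ^ i₁ := by rw [e1, e2]
            _ = (π m₁) ^ i₂ * (π m₂) ^ i₁ := by rw [h₁, h₂]
            _ = π (m₁ ^ i₂ * m₂ ^ i₁) := by rw [map_mul, map_pow, map_pow]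
        | inv x hx ihx =>
          obtain ⟨i, hi, mm, hmm, h⟩ := ihx
          refine ⟨i, hi, mm⁻¹, inv_mem hmm, ?_⟩
          rw [← heq2] at h ⊢
          rw [inv_pow, map_inv, h, map_inv]
      -- assemble
      obtain ⟨i, hi, mm, hmm, hzi⟩ := Cgen _ hz
      refine ⟨j * i, Nat.mul_pos hj hi, mm * m ^ i, mul_mem hmm (pow_mem hm i), ?_⟩
      rw [← heq2] at hzi ⊢
      have hnj : π (n ^ j) = π (n ^ j * m⁻¹) * π m := by
        rw [← map_mul, inv_mul_cancel_right]
      calc π (n ^ (j * i)) = π ((n ^ j) ^ i) := by rw [pow_mul]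
        _ = (π (n ^ j)) ^ i := map_pow π _ i
        _ = (π (n ^ j * m⁻¹) * π m) ^ i := by rw [hnj]
        _ = π (n ^ j * m⁻¹) ^ i * π m ^ i := Commute.mul_pow (hcentQ _ hz (π m)) i
        _ = π ((n ^ j * m⁻¹) ^ i) * π (m ^ i) := by rw [map_pow, map_pow]
        _ = π mm * π (m ^ i) := by rw [hzi]
        _ = π (mm * m ^ i) := (map_mul π mm (m ^ i)).symm
  obtain ⟨c, hc⟩ := nilpotent_iff_lowerCentralSeries.mp hnil
  intro n
  obtain ⟨j, hj, m, hm, hmem⟩ := key c n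
  have hbot : (⊤ : Subgroup Nn).lowerCentralSeries (c + 1) = ⊥ := by
    rw [eq_bot_iff, ← hc]
    exact Subgroup.lowerCentralSeries_antitone _ (Nat.le_succ c)
  rw [hbot, Subgroup.mem_bot, mul_inv_eq_one] at hmem
  exact ⟨j, hj, hmem ▸ hm⟩

end Isolator

section Essential

open Submodule Module

variable {T : Type*} [AddCommGroup T] [Module ℚ T] [FiniteDimensional ℚ T]

/-- A submodule is essential (w.r.t. a set `O`) if it meets `O`, is spanned by its
intersection with `O`, and this intersection is not covered by finitely many proper
submodules. -/
private def Ess (O : Set T) (W : Submodule ℚ T) : Prop :=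
  (O ∩ (W : Set T)).Nonempty ∧ W = span ℚ (O ∩ (W : Set T)) ∧
    ∀ s : Finset (Submodule ℚ T), (∀ Z ∈ s, Z < W) →
      ¬ (O ∩ (W : Set T) ⊆ ⋃ Z ∈ s, (Z : Set T))

private lemma ess_cover (O : Set T) :
    ∀ (W : Submodule ℚ T), W = span ℚ (O ∩ (W : Set T)) →
      ∃ s : Finset (Submodule ℚ T), (∀ E ∈ s, Ess O E ∧ E ≤ W) ∧
        O ∩ (W : Set T) ⊆ ⋃ E ∈ s, (E : Set T) := by
  classical
  suffices h : ∀ (n : ℕ) (W : Submodule ℚ T), finrank ℚ W ≤ n →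
      W = span ℚ (O ∩ (W : Set T)) →
      ∃ s : Finset (Submodule ℚ T), (∀ E ∈ s, Ess O E ∧ E ≤ W) ∧
        O ∩ (W : Set T) ⊆ ⋃ E ∈ s, (E : Set T) by
    exact fun W hW => h (finrank ℚ W) W le_rfl hW
  intro n
  induction n using Nat.strong_induction_on with
  | _ n IH =>
    intro W hrank hspanW
    by_cases h0 : (O ∩ (W : Set T)) = ∅
    · exact ⟨∅, by simp, by rw [h0]; exact Set.empty_subset _⟩
    by_cases hEss : Ess O W
    · refine ⟨{W}, by simp [hEss], ?_⟩
      intro x hx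
      simp only [Finset.mem_singleton, Set.mem_iUnion]
      exact ⟨W, rfl, hx.2⟩
    · have hne : (O ∩ (W : Set T)).Nonempty := Set.nonempty_iff_ne_empty.mpr h0
      have hres : ¬ ∀ s : Finset (Submodule ℚ T), (∀ Z ∈ s, Z < W) →
          ¬ (O ∩ (W : Set T) ⊆ ⋃ Z ∈ s, (Z : Set T)) := by
        intro hres; exact hEss ⟨hne, hspanW, hres⟩
      push_neg at hres
      obtain ⟨s₀, hs₀, hcov⟩ := hres
      have hrec : ∀ Z : Submodule ℚ T, Z ∈ s₀ →
          ∃ s : Finset (Submodule ℚ T),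
            (∀ E ∈ s, Ess O E ∧ E ≤ span ℚ (O ∩ (Z : Set T))) ∧
            O ∩ ((span ℚ (O ∩ (Z : Set T)) : Submodule ℚ T) : Set T) ⊆
              ⋃ E ∈ s, (E : Set T) := by
        intro Z hZ
        have hZW := hs₀ Z hZ
        set Z' : Submodule ℚ T := span ℚ (O ∩ (Z : Set T)) with hZ'
        have hZ'le : Z' ≤ Z := span_le.mpr Set.inter_subset_right
        have hlt : finrank ℚ Z' < finrank ℚ W :=
          lt_of_le_of_lt (Submodule.finrank_mono hZ'le)
            (Submodule.finrank_lt_finrank_of_lt hZW)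
        have hZ'span : Z' = span ℚ (O ∩ (Z' : Set T)) := by
          apply le_antisymm
          · rw [hZ']
            apply span_mono
            intro x hx
            exact ⟨hx.1, subset_span hx⟩
          · rw [span_le]
            exact Set.inter_subset_right
        exact IH (finrank ℚ Z') (lt_of_lt_of_le hlt hrank) Z' le_rfl hZ'span
      choose f hf1 hf2 using hrec
      refine ⟨s₀.attach.biUnion (fun z => f z.1 z.2), ?_, ?_⟩
      · intro E hE
        rw [Finset.mem_biUnion] at hE
        obtain ⟨⟨Z, hZ⟩, -, hEZ⟩ := hE
        obtain ⟨hEss', hEle⟩ := hf1 Z hZ E hEZ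
        refine ⟨hEss', le_trans hEle (le_trans (span_le.mpr Set.inter_subset_right)
          (le_of_lt (hs₀ Z hZ)))⟩
      · intro x hx
        have hxcov := hcov hx
        simp only [Set.mem_iUnion] at hxcov
        obtain ⟨Z, hZs, hxZ⟩ := hxcov
        have hxZ' : x ∈ O ∩ ((span ℚ (O ∩ (Z : Set T)) : Submodule ℚ T) : Set T) :=
          ⟨hx.1, subset_span ⟨hx.1, hxZ⟩⟩
        have := hf2 Z hZs hxZ'
        simp only [Set.mem_iUnion] at this ⊢
        obtain ⟨E, hE1, hE2⟩ := this
        exact ⟨E, Finset.mem_biUnion.mpr ⟨⟨Z, hZs⟩, Finset.mem_attach _ _, hE1⟩, hE2⟩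

end Essential

section Avoid

open Submodule Module

variable {G : Type*} [Group G] {V : Type*} [AddCommGroup V] [Module ℚ V]
  [FiniteDimensional ℚ V]

/-- Key consequence of strong irreducibility: finitely many nonzero vectors cannot be
trapped in proper subspaces along the whole group. -/
private lemma avoid (ρ : G →* (V ≃ₗ[ℚ] V))
    (hsi : ∀ H : Subgroup G, H.FiniteIndex → ∀ W : Submodule ℚ V,
      (∀ g ∈ H, ∀ v ∈ W, ρ g v ∈ W) → W = ⊥ ∨ W = ⊤)
    {I : Type*} [Fintype I] (v : I → V) (U : I → Submodule ℚ V)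
    (hv : ∀ i, v i ≠ 0) (hU : ∀ i, U i ≠ ⊤)
    (hcov : ∀ g : G, ∃ i, ρ g (v i) ∈ U i) : False := by
  classical
  let T := I → V
  let τ : G → (T ≃ₗ[ℚ] T) := fun g => LinearEquiv.piCongrRight (fun _ : I => ρ g)
  have hτapp : ∀ g (w : T) (i : I), τ g w i = ρ g (w i) := fun g w i => rfl
  have hmulapp : ∀ (g h : G) (x : V), ρ (g * h) x = ρ g (ρ h x) := by
    intro g h x; rw [map_mul]; rfl
  let O : Set T := Set.range (fun g : G => fun i => ρ g (v i))
  have hOmem : ∀ g : G, (fun i => ρ g (v i)) ∈ O := fun g => ⟨g, rfl⟩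
  have hOim : ∀ g, (τ g) '' O = O := by
    intro g
    apply Set.eq_of_subset_of_subset
    · rintro _ ⟨w, ⟨h, rfl⟩, rfl⟩
      refine ⟨g * h, ?_⟩
      funext i
      exact hmulapp g h (v i)
    · rintro _ ⟨h, rfl⟩
      refine ⟨fun i => ρ (g⁻¹ * h) (v i), ⟨g⁻¹ * h, rfl⟩, ?_⟩
      funext i
      show ρ g (ρ (g⁻¹ * h) (v i)) = ρ h (v i)
      rw [← hmulapp, mul_inv_cancel_left]
  -- the coordinate slabs
  let S : I → Submodule ℚ T := fun i => (U i).comap (LinearMap.proj i)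
  -- essential cover of O
  let A : I → Submodule ℚ T := fun i => span ℚ (O ∩ ((S i : Submodule ℚ T) : Set T))
  have hAspan : ∀ i, A i = span ℚ (O ∩ ((A i : Submodule ℚ T) : Set T)) := by
    intro i
    apply le_antisymm
    · apply span_mono
      intro x hx
      exact ⟨hx.1, subset_span hx⟩
    · rw [span_le]
      exact Set.inter_subset_right
  choose sB hsB hcovB using fun i => ess_cover O (A i) (hAspan i)
  let B : Finset (Submodule ℚ T) := Finset.univ.biUnion sB
  have hBmem : ∀ E ∈ B, Ess O E ∧ ∃ i, E ≤ S i := by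
    intro E hE
    rw [Finset.mem_biUnion] at hE
    obtain ⟨i, -, hEi⟩ := hE
    obtain ⟨h1, h2⟩ := hsB i E hEi
    exact ⟨h1, i, le_trans h2 (span_le.mpr Set.inter_subset_right)⟩
  have hcovO : ∀ w ∈ O, ∃ E ∈ B, w ∈ (E : Set T) := by
    intro w hw
    obtain ⟨g, rfl⟩ := hw
    obtain ⟨i, hi⟩ := hcov g
    have hwS : (fun i => ρ g (v i)) ∈ (S i : Set T) := hi
    have hwA : (fun i => ρ g (v i)) ∈ O ∩ ((A i : Submodule ℚ T) : Set T) :=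
      ⟨hOmem g, subset_span ⟨hOmem g, hwS⟩⟩
    have := hcovB i hwA
    simp only [Set.mem_iUnion] at this
    obtain ⟨E, hE1, hE2⟩ := this
    exact ⟨E, Finset.mem_biUnion.mpr ⟨i, Finset.mem_univ i, hE1⟩, hE2⟩
  -- every essential subspace lies below a member of B
  have hupper : ∀ W : Submodule ℚ T, Ess O W → ∃ E ∈ B, W ≤ E := by
    intro W hW
    by_contra hcon
    push_neg at hcon
    have hZlt : ∀ E ∈ B.image (· ⊓ W), E < W := by
      intro Z hZ
      rw [Finset.mem_image] at hZ
      obtain ⟨E, hE, rfl⟩ := hZ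
      refine lt_of_le_of_ne inf_le_right (fun he => hcon E hE ?_)
      conv_lhs => rw [← he]
      exact inf_le_left
    refine hW.2.2 (B.image (· ⊓ W)) hZlt ?_
    intro x hx
    obtain ⟨E, hEB, hxE⟩ := hcovO x hx.1
    simp only [Set.mem_iUnion]
    exact ⟨E ⊓ W, Finset.mem_image_of_mem _ hEB, hxE, hx.2⟩
  -- maximal rank essential subspaces
  have hOne : O.Nonempty := ⟨_, hOmem 1⟩
  obtain ⟨w₀, hw₀O⟩ := hOne
  obtain ⟨E₀, hE₀B, hw₀E⟩ := hcovO w₀ hw₀O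
  let RS : Set ℕ := {n | ∃ W : Submodule ℚ T, Ess O W ∧ finrank ℚ W = n}
  have hRSne : RS.Nonempty := ⟨finrank ℚ E₀, E₀, (hBmem E₀ hE₀B).1, rfl⟩
  have hRSbdd : BddAbove RS := by
    refine ⟨finrank ℚ T, ?_⟩
    rintro n ⟨W, hW, rfl⟩
    exact Submodule.finrank_le W
  obtain ⟨W₀, hW₀ess, hW₀rank⟩ := Nat.sSup_mem hRSne hRSbdd
  -- max-rank essentials are members of B
  have hmax : ∀ W : Submodule ℚ T, Ess O W → finrank ℚ W = sSup RS → W ∈ B := by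
    intro W hW hrk
    obtain ⟨E, hEB, hWE⟩ := hupper W hW
    have hEle : finrank ℚ E ≤ sSup RS := le_csSup hRSbdd ⟨E, (hBmem E hEB).1, rfl⟩
    have : W = E := Submodule.eq_of_le_of_finrank_le hWE (by omega)
    rwa [this]
  -- essentialness is preserved by the action
  have hmap : ∀ (g : G) (W : Submodule ℚ T), Ess O W →
      Ess O (W.map (τ g : T →ₗ[ℚ] T)) := by
    intro g W hW
    have hinj : Function.Injective (τ g : T →ₗ[ℚ] T) := (τ g).injective
    have hinj' : Function.Injective ⇑(τ g) := (τ g).injective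
    have him : (O ∩ ((W.map (τ g : T →ₗ[ℚ] T) : Submodule ℚ T) : Set T)) =
        (τ g) '' (O ∩ (W : Set T)) := by
      rw [Submodule.map_coe]
      simp only [LinearEquiv.coe_coe]
      rw [Set.image_inter hinj', hOim g]
    refine ⟨?_, ?_, ?_⟩
    · obtain ⟨x, hx⟩ := hW.1
      exact ⟨τ g x, by rw [him]; exact ⟨x, hx, rfl⟩⟩
    · rw [him]
      conv_lhs => rw [hW.2.1]
      rw [Submodule.map_span]
      simp only [LinearEquiv.coe_coe]
    · intro s hs hsub
      apply hW.2.2 (s.image (Submodule.comap (τ g : T →ₗ[ℚ] T)))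
      · intro Z hZ
        rw [Finset.mem_image] at hZ
        obtain ⟨Y, hY, rfl⟩ := hZ
        have := hs Y hY
        have h1 : Submodule.comap (τ g : T →ₗ[ℚ] T) (W.map (τ g : T →ₗ[ℚ] T)) = W :=
          Submodule.comap_map_eq_of_injective hinj W
        exact h1 ▸ Submodule.comap_strictMono_of_surjective (τ g).surjective this
      · intro x hx
        have hxim : τ g x ∈ O ∩ ((W.map (τ g : T →ₗ[ℚ] T) : Submodule ℚ T) : Set T) := by
          rw [him]; exact ⟨x, hx, rfl⟩
        have := hsub hxim
        simp only [Set.mem_iUnion] at this ⊢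
        obtain ⟨Z, hZ, hxZ⟩ := this
        exact ⟨Submodule.comap (τ g : T →ₗ[ℚ] T) Z,
          Finset.mem_image_of_mem _ hZ, hxZ⟩
  -- the action of G on submodules of T
  letI act : MulAction G (Submodule ℚ T) :=
    { smul := fun g W => W.map (τ g : T →ₗ[ℚ] T)
      one_smul := fun W => by
        show W.map (τ 1 : T →ₗ[ℚ] T) = W
        have : (τ 1 : T →ₗ[ℚ] T) = LinearMap.id := by
          apply LinearMap.ext
          intro w
          funext i
          show ρ 1 (w i) = w i
          rw [map_one]
          rfl
        rw [this, Submodule.map_id]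
      mul_smul := fun g h W => by
        show W.map (τ (g * h) : T →ₗ[ℚ] T) = (W.map (τ h : T →ₗ[ℚ] T)).map (τ g : T →ₗ[ℚ] T)
        rw [← Submodule.map_comp]
        congr 1
        apply LinearMap.ext
        intro w
        funext i
        show ρ (g * h) (w i) = ρ g ((τ h) w i)
        rw [hτapp, hmulapp] }
  have hsmul_def : ∀ (g : G) (W : Submodule ℚ T), g • W = W.map (τ g : T →ₗ[ℚ] T) :=
    fun g W => rfl
  -- finrank is preserved
  have hrank_map : ∀ (g : G) (W : Submodule ℚ T),
      finrank ℚ (W.map (τ g : T →ₗ[ℚ] T)) = finrank ℚ W := by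
    intro g W
    exact (LinearEquiv.finrank_eq (Submodule.equivMapOfInjective _ (τ g).injective W)).symm
  -- the orbit of W₀ is finite
  have horb : MulAction.orbit G W₀ ⊆ (B : Set (Submodule ℚ T)) := by
    rintro _ ⟨g, rfl⟩
    show W₀.map (τ g : T →ₗ[ℚ] T) ∈ (B : Set (Submodule ℚ T))
    exact hmax _ (hmap g W₀ hW₀ess) (by rw [hrank_map, hW₀rank])
  have horbfin : (MulAction.orbit G W₀).Finite := B.finite_toSet.subset horb
  haveI := horbfin.to_subtype
  haveI : Finite (G ⧸ MulAction.stabilizer G W₀) :=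
    Finite.of_equiv _ (MulAction.orbitEquivQuotientStabilizer G W₀)
  have hfi : (MulAction.stabilizer G W₀).FiniteIndex :=
    Subgroup.finiteIndex_of_finite_quotient
  -- project to the distinguished coordinate
  obtain ⟨-, i₀, hW₀S⟩ := hBmem W₀ (hmax W₀ hW₀ess hW₀rank)
  let Wd : Submodule ℚ V := W₀.map (LinearMap.proj i₀ : T →ₗ[ℚ] V)
  have hWdinv : ∀ g ∈ MulAction.stabilizer G W₀, ∀ x ∈ Wd, ρ g x ∈ Wd := by
    intro g hg x hx
    obtain ⟨w, hw, rfl⟩ := hx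
    have hτw : τ g w ∈ W₀ := by
      have : τ g w ∈ W₀.map (τ g : T →ₗ[ℚ] T) := Submodule.mem_map_of_mem hw
      rwa [← hsmul_def, hg] at this
    exact ⟨τ g w, hτw, rfl⟩
  rcases hsi _ hfi Wd hWdinv with hbot | htop
  · -- W₀ contains a point of O with nonzero i₀ coordinate
    obtain ⟨x, hxO, hxW⟩ := hW₀ess.1
    obtain ⟨h, rfl⟩ := hxO
    have : ρ h (v i₀) ∈ Wd := ⟨_, hxW, rfl⟩
    rw [hbot, Submodule.mem_bot] at this
    exact hv i₀ ((ρ h).map_eq_zero_iff.mp this)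
  · -- Wd is inside the proper subspace U i₀
    apply hU i₀
    rw [eq_top_iff, ← htop]
    rintro _ ⟨w, hw, rfl⟩
    exact hW₀S hw

end Avoid

/-- Let `G` be a group with a nilpotent normal subgroup `N`, and let
`V = N^{ab} ⊗ ℚ` be nonzero and finite dimensional (encoded by the additive map `ι : N → V`
whose image spans `V` and whose kernel consists of the elements having a positive power in
`[N,N]`). Let `ρ` be the representation of `G` on `V` induced by conjugation (it kills `N`,
hence factors through `Q = G/N`), and assume it is strongly irreducible: for every
finite-index subgroup, the only invariant subspaces are `0` and `V`. If `L ⊆ N` maps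
injectively to `N^{ab}/T(N^{ab})` (equivalently, `ι` is injective on `L`), then `L` is a
non-foldable subset of `G`. -/
theorem strongly_irreducible_extension_nonfoldable (G : Type*) [Group G]
    (N : Subgroup G) [hN : N.Normal] [Group.IsNilpotent ↥N]
    (V : Type*) [AddCommGroup V] [Module ℚ V] [FiniteDimensional ℚ V] [Nontrivial V]
    (ι : ↥N → V)
    (hι : ∀ a b : ↥N, ι (a * b) = ι a + ι b)
    (hspan : Submodule.span ℚ (Set.range ι) = ⊤)
    (hker : ∀ m : ↥N, ι m = 0 ↔ ∃ j : ℕ, 0 < j ∧ m ^ j ∈ commutator ↥N)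
    (ρ : G →* (V ≃ₗ[ℚ] V))
    (hρN : ∀ m : ↥N, ρ ↑m = 1)
    (hρconj : ∀ (g : G) (m : ↥N),
      ρ g (ι m) = ι ⟨g * ↑m * g⁻¹, hN.conj_mem ↑m m.2 g⟩)
    (hsi : ∀ H : Subgroup G, H.FiniteIndex → ∀ W : Submodule ℚ V,
      (∀ g ∈ H, ∀ v ∈ W, ρ g v ∈ W) → W = ⊥ ∨ W = ⊤)
    (L : Set G) (hLN : L ⊆ ↑N)
    (hLinj : ∀ (a : G) (ha : a ∈ L) (b : G) (hb : b ∈ L),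
      ι ⟨a, hLN ha⟩ = ι ⟨b, hLN hb⟩ → a = b) :
    NonFoldableSubset L := by
  classical
  intro X _ _ _ s hsL hsfin
  by_contra hno
  push_neg at hno
  -- every point is "folded" by a pair from s
  have hbad : ∀ x : X, ∃ a, ∃ _ : a ∈ s, ∃ b, ∃ _ : b ∈ s, a ≠ b ∧ (b⁻¹ * a) • x = x := by
    intro x
    have h := hno x
    simp only [Set.InjOn] at h
    push_neg at h
    obtain ⟨a, ha, b, hb, heq, hne⟩ := h
    refine ⟨a, ha, b, hb, hne, ?_⟩
    have heq' : a • x = b • x := heq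
    rw [mul_smul, heq', inv_smul_smul]
  -- the finite set of "difference" elements inside N
  have hmemN : ∀ {a b : G}, a ∈ s → b ∈ s → b⁻¹ * a ∈ N := fun ha hb =>
    mul_mem (inv_mem (hLN (hsL hb))) (hLN (hsL ha))
  set D : Set ↥N :=
    {d | ∃ a, ∃ _ : a ∈ s, ∃ b, ∃ _ : b ∈ s, a ≠ b ∧ (d : G) = b⁻¹ * a} with hD
  have hDfin : D.Finite := by
    have h1 : D ⊆ (Subtype.val : ↥N → G) ⁻¹'
        ((fun p : G × G => p.2⁻¹ * p.1) '' (s ×ˢ s)) := by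
      rintro d ⟨a, ha, b, hb, -, hd⟩
      exact ⟨(a, b), ⟨ha, hb⟩, hd.symm⟩
    exact Set.Finite.subset
      (Set.Finite.preimage Subtype.val_injective.injOn ((hsfin.prod hsfin).image _)) h1
  -- difference elements have nonzero image under ι
  have hDi : ∀ d ∈ D, ι d ≠ 0 := by
    rintro d ⟨a, ha, b, hb, hne, hd⟩ h0
    have hb' : (⟨b, hLN (hsL hb)⟩ : ↥N) * d = ⟨a, hLN (hsL ha)⟩ := by
      apply Subtype.ext
      show b * (d : G) = a
      rw [hd, mul_inv_cancel_left]
    have := hι ⟨b, hLN (hsL hb)⟩ d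
    rw [hb', h0, add_zero] at this
    exact hne (hLinj a (hsL ha) b (hsL hb) this)
  -- pick one difference element
  obtain ⟨a₀, ha₀, b₀, hb₀, hne₀, hfix₀⟩ := hbad (Classical.arbitrary X)
  set d₁ : ↥N := ⟨b₀⁻¹ * a₀, hmemN ha₀ hb₀⟩ with hd₁
  have hd₁D : d₁ ∈ D := ⟨a₀, ha₀, b₀, hb₀, hne₀, rfl⟩
  have hd₁i : ι d₁ ≠ 0 := hDi d₁ hd₁D
  -- for each m > 0, some point is moved by d₁ ^ m
  have hmove : ∀ m : ℕ, 0 < m → ∃ x : X, ¬ ((d₁ : G) ^ m • x = x) := by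
    intro m hm
    by_contra hfix
    push_neg at hfix
    have h1 : (d₁ : G) ^ m = 1 :=
      eq_of_smul_eq_smul (fun x : X => by rw [hfix x, one_smul])
    have h2 : (d₁ ^ m : ↥N) = 1 := by
      apply Subtype.ext
      simp only [SubgroupClass.coe_pow, OneMemClass.coe_one]
      exact h1
    have h3 : ι (d₁ ^ m) = 0 := by rw [h2, iota_one hι]
    rw [iota_pow hι, smul_eq_zero] at h3
    rcases h3 with h3 | h3
    · have : (m : ℚ) ≠ 0 := Nat.cast_ne_zero.mpr hm.ne'
      exact this h3
    · exact hd₁i h3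
  have hxs : ∀ j : ℕ, ∃ x : X, ¬ ((d₁ : G) ^ (j + 1).factorial • x = x) :=
    fun j => hmove _ (Nat.factorial_pos _)
  choose xs hxsp using hxs
  -- a nonprincipal ultrafilter on ℕ
  let 𝒰 : Ultrafilter ℕ := Ultrafilter.of Filter.cofinite
  have h𝒰le : (𝒰 : Filter ℕ) ≤ Filter.cofinite := Ultrafilter.of_le _
  have h𝒰fin : ∀ A : Set ℕ, A.Finite → A ∉ 𝒰 := by
    intro A hA
    rw [← Ultrafilter.compl_mem_iff_notMem]
    exact h𝒰le hA.compl_mem_cofinite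
  -- the limit subgroup
  set Stb : ℕ → Subgroup G := fun j => MulAction.stabilizer G (xs j) with hStb
  set Hω : Subgroup G :=
    { carrier := {g : G | {j | g ∈ Stb j} ∈ (𝒰 : Filter ℕ)}
      one_mem' := by
        have : {j : ℕ | (1 : G) ∈ Stb j} = Set.univ := by
          ext j; simp [one_mem]
        rw [Set.mem_setOf_eq, this]
        exact Filter.univ_mem
      mul_mem' := by
        intro a b ha hb
        refine Filter.mem_of_superset (Filter.inter_mem ha hb) ?_
        intro j hj
        simp only [Set.mem_setOf_eq]
        exact mul_mem hj.1 hj.2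
      inv_mem' := by
        intro a ha
        refine Filter.mem_of_superset ha ?_
        intro j hj
        simp only [Set.mem_setOf_eq]
        exact inv_mem hj } with hHω
  have hHωmem : ∀ g : G, g ∈ Hω ↔ {j | g ∈ Stb j} ∈ (𝒰 : Filter ℕ) := fun g => Iff.rfl
  -- Hω is D-rich
  have hDrich : ∀ g : G, ∃ d ∈ D, g * (d : G) * g⁻¹ ∈ Hω := by
    intro g
    have hj : ∀ j : ℕ, ∃ d ∈ D, g * (d : G) * g⁻¹ ∈ Stb j := by
      intro j
      obtain ⟨a, ha, b, hb, hne, hfx⟩ := hbad (g⁻¹ • xs j)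
      refine ⟨⟨b⁻¹ * a, hmemN ha hb⟩, ⟨a, ha, b, hb, hne, rfl⟩, ?_⟩
      rw [MulAction.mem_stabilizer_iff]
      show (g * (b⁻¹ * a) * g⁻¹) • xs j = xs j
      rw [mul_smul, mul_smul]
      rw [hfx]
      rw [smul_inv_smul]
    by_contra hcon
    push_neg at hcon
    have hcompl : ∀ d ∈ D, {j | g * (d : G) * g⁻¹ ∈ Stb j}ᶜ ∈ (𝒰 : Filter ℕ) := by
      intro d hd
      have := hcon d hd
      rw [hHωmem] at this
      exact (Ultrafilter.compl_mem_iff_notMem).mpr this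
    have hint : (⋂ d ∈ D, {j | g * (d : G) * g⁻¹ ∈ Stb j}ᶜ) ∈ (𝒰 : Filter ℕ) :=
      (Filter.biInter_mem hDfin).mpr hcompl
    obtain ⟨j, hjmem⟩ := Filter.nonempty_of_mem hint
    simp only [Set.mem_iInter, Set.mem_compl_iff, Set.mem_setOf_eq] at hjmem
    obtain ⟨d, hdD, hdStb⟩ := hj j
    exact hjmem d hdD hdStb
  -- the subgroup of N seen by Hω
  set Mω : Subgroup ↥N := Hω.comap N.subtype with hMω
  by_cases hUtop : Submodule.span ℚ (ι '' (Mω : Set ↥N)) = ⊤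
  · -- isolator: a positive power of d₁ lies in Mω : contradiction with the choice of xs
    obtain ⟨jj, hjj, hjmem⟩ := isolator ι hι (fun m hm => (hker m).mp hm) Mω hUtop d₁
    have hpow : (d₁ : G) ^ jj ∈ Hω := by
      have : ((d₁ ^ jj : ↥N) : G) ∈ Hω := hjmem
      rwa [SubgroupClass.coe_pow] at this
    rw [hHωmem] at hpow
    have hsub : ∀ j : ℕ, (d₁ : G) ^ jj ∈ Stb j → j + 1 < jj := by
      intro j hjmem2
      by_contra hge
      push_neg at hge  -- jj ≤ j + 1
      obtain ⟨t, ht⟩ := Nat.dvd_factorial hjj hge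
      have : (d₁ : G) ^ (j + 1).factorial ∈ Stb j := by
        rw [ht, pow_mul]
        exact pow_mem hjmem2 t
      exact hxsp j this
    have hfin : {j | (d₁ : G) ^ jj ∈ Stb j}.Finite :=
      Set.Finite.subset (Set.finite_Iio jj) (fun j hj =>
        Set.mem_Iio.mpr (lt_of_le_of_lt (Nat.le_succ j) (hsub j hj)))
    exact h𝒰fin _ hfin hpow
  · -- otherwise apply the avoidance lemma to contradict D-richness
    refine avoid ρ hsi (I := ↥(hDfin.toFinset))
      (fun i => ι i.1) (fun _ => Submodule.span ℚ (ι '' (Mω : Set ↥N)))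
      (fun i => hDi i.1 (hDfin.mem_toFinset.mp i.2))
      (fun _ => hUtop) ?_
    intro g
    obtain ⟨d, hdD, hdH⟩ := hDrich g
    refine ⟨⟨d, hDfin.mem_toFinset.mpr hdD⟩, ?_⟩
    show ρ g (ι d) ∈ _
    rw [hρconj g d]
    apply Submodule.subset_span
    refine ⟨⟨g * (d : G) * g⁻¹, hN.conj_mem (d : G) d.2 g⟩, ?_, rfl⟩
    show (⟨g * (d : G) * g⁻¹, _⟩ : ↥N) ∈ Mω
    rw [hMω, Subgroup.mem_comap]
    exact hdH
end

section
/- Let G be a group with an abelian normal subgroup M, and let π : G → G/M be the quotient map. Let P be a finite subset of G not containing the identity, with |P| = r, and let H be a subgroup of G such that for every m ∈ M the conjugate m H m⁻¹ intersects P (i.e., for every m ∈ M there is p ∈ P with m⁻¹ p m ∈ H). Then there exists g ∈ P such that π(g) ∈ π(H) and the set M_{g,H} = {m ∈ M : m g m⁻¹ g⁻¹ ∈ H} is a subgroup of M of index at most r in M. -/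
open scoped Pointwise

private theorem neumann_comm_of_mem {G : Type*} [Group G] {M : Subgroup G}
    (hM : ∀ a b : ↥M, a * b = b * a) {x y : G} (hx : x ∈ M) (hy : y ∈ M) :
    x * y = y * x := by
  have := congrArg (Subtype.val) (hM ⟨x, hx⟩ ⟨y, hy⟩)
  simpa using this

private theorem neumann_comm3 {G : Type*} [Group G] {M : Subgroup G}
    (hM : ∀ a b : ↥M, a * b = b * a) {x y z : G} (hx : x ∈ M) (hy : y ∈ M) (hz : z ∈ M) :
    x * y * z = z * y * x := by
  rw [neumann_comm_of_mem hM hx hy, mul_assoc, neumann_comm_of_mem hM hx hz, ← mul_assoc,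
    neumann_comm_of_mem hM hy hz]

/-- The set `{m ∈ M : [m,g] ∈ H}` as a subgroup of the abelian normal subgroup `M`. -/
private def neumannSubgroup {G : Type*} [Group G] (M : Subgroup G) [M.Normal]
    (hM : ∀ a b : ↥M, a * b = b * a) (H : Subgroup G) (g : G) : Subgroup ↥M where
  carrier := {n : ↥M | (n : G) * g * (n : G)⁻¹ * g⁻¹ ∈ H}
  one_mem' := by simpa using H.one_mem
  mul_mem' := by
    intro n1 n2 hn1 hn2
    simp only [Set.mem_setOf_eq] at *
    have hc2 : (n2 : G) * g * (n2 : G)⁻¹ * g⁻¹ ∈ M := by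
      have h1 : ((n2 : G) * g * (n2 : G)⁻¹ * g⁻¹ : G) = (n2 : G) * (g * (n2 : G)⁻¹ * g⁻¹) := by
        group
      rw [h1]
      exact mul_mem n2.2 (Subgroup.Normal.conj_mem ‹M.Normal› _ (inv_mem n2.2) g)
    have key : ((↑(n1 * n2) : G)) * g * (↑(n1 * n2) : G)⁻¹ * g⁻¹
        = ((n2 : G) * g * (n2 : G)⁻¹ * g⁻¹) * ((n1 : G) * g * (n1 : G)⁻¹ * g⁻¹) := by
      push_cast
      calc ((n1 : G) * n2) * g * ((n1 : G) * n2)⁻¹ * g⁻¹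
          = (n1 : G) * ((n2 : G) * g * (n2 : G)⁻¹ * g⁻¹) * (g * (n1 : G)⁻¹ * g⁻¹) := by group
        _ = ((n2 : G) * g * (n2 : G)⁻¹ * g⁻¹) * (n1 : G) * (g * (n1 : G)⁻¹ * g⁻¹) := by
            rw [neumann_comm_of_mem hM n1.2 hc2]
        _ = ((n2 : G) * g * (n2 : G)⁻¹ * g⁻¹) * ((n1 : G) * g * (n1 : G)⁻¹ * g⁻¹) := by group
    rw [key]
    exact mul_mem hn2 hn1
  inv_mem' := by
    intro n hn
    simp only [Set.mem_setOf_eq] at *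
    have hc : (n : G) * g * (n : G)⁻¹ * g⁻¹ ∈ M := by
      have h1 : ((n : G) * g * (n : G)⁻¹ * g⁻¹ : G) = (n : G) * (g * (n : G)⁻¹ * g⁻¹) := by group
      rw [h1]
      exact mul_mem n.2 (Subgroup.Normal.conj_mem ‹M.Normal› _ (inv_mem n.2) g)
    have key : ((↑(n⁻¹) : G)) * g * (↑(n⁻¹) : G)⁻¹ * g⁻¹
        = ((n : G) * g * (n : G)⁻¹ * g⁻¹)⁻¹ := by
      push_cast
      rw [inv_inv]
      calc (n : G)⁻¹ * g * (n : G) * g⁻¹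
          = (n : G)⁻¹ * ((n : G) * g * (n : G)⁻¹ * g⁻¹)⁻¹ * (n : G) := by group
        _ = ((n : G) * g * (n : G)⁻¹ * g⁻¹)⁻¹ * (n : G)⁻¹ * (n : G) := by
            rw [neumann_comm_of_mem hM (inv_mem n.2) (inv_mem hc)]
        _ = ((n : G) * g * (n : G)⁻¹ * g⁻¹)⁻¹ := by group
    rw [key]
    exact inv_mem hn

private theorem mem_neumannSubgroup {G : Type*} [Group G] {M : Subgroup G} [M.Normal]
    {hM : ∀ a b : ↥M, a * b = b * a} {H : Subgroup G} {g : G} {n : ↥M} :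
    n ∈ neumannSubgroup M hM H g ↔ (n : G) * g * (n : G)⁻¹ * g⁻¹ ∈ H := Iff.rfl

/-- Let `G` be a group with an abelian normal subgroup `M`, `π : G → G/M`,
`P` a finite subset of `G \ {1}`, and `H ≤ G` a subgroup such that every `M`-conjugate of `H`
meets `P`. Then there is `g ∈ P` with `π g ∈ π(H)` such that
`M_{g,H} = {m ∈ M : [m,g] ∈ H}` is a subgroup of `M` of index at most `|P|` in `M`. -/
theorem confined_abelian_normal_neumann (G : Type*) [Group G]
    (M : Subgroup G) [M.Normal] (hM : ∀ a b : ↥M, a * b = b * a)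
    (P : Finset G) (hP : (1 : G) ∉ P)
    (H : Subgroup G)
    (hconf : ∀ m ∈ M, ∃ p ∈ P, m⁻¹ * p * m ∈ H) :
    ∃ g ∈ P,
      (QuotientGroup.mk g : G ⧸ M) ∈ H.map (QuotientGroup.mk' M) ∧
      ∃ L : Subgroup G,
        (L : Set G) = {m : G | m ∈ M ∧ m * g * m⁻¹ * g⁻¹ ∈ H} ∧
        L.relIndex M ≠ 0 ∧ L.relIndex M ≤ P.card := by
  classical
  set K : G → Subgroup ↥M := fun g => neumannSubgroup M hM H g with hK
  -- the "good" elements of P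
  set s : Finset G := P.filter (fun p => ∃ m : ↥M, (m : G)⁻¹ * p * m ∈ H) with hs
  -- choose witnesses
  set a : G → ↥M := fun p =>
    if h : ∃ m : ↥M, (m : G)⁻¹ * p * m ∈ H then h.choose else 1 with ha
  have ha' : ∀ p ∈ s, ((a p : ↥M) : G)⁻¹ * p * (a p) ∈ H := by
    intro p hp
    rw [hs, Finset.mem_filter] at hp
    obtain ⟨-, h⟩ := hp
    simp only [ha, dif_pos h]
    exact h.choose_spec
  -- covering
  have hcovers : ⋃ i ∈ s, (a i) • ((K i) : Set ↥M) = Set.univ := by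
    rw [Set.eq_univ_iff_forall]
    intro x
    obtain ⟨p, hpP, hpx⟩ := hconf (x : G) x.2
    have hpex : ∃ m : ↥M, (m : G)⁻¹ * p * m ∈ H := ⟨x, hpx⟩
    have hps : p ∈ s := by rw [hs, Finset.mem_filter]; exact ⟨hpP, hpex⟩
    have hm0 : ((a p : ↥M) : G)⁻¹ * p * (a p) ∈ H := ha' p hps
    refine Set.mem_biUnion hps ?_
    rw [mem_leftCoset_iff]
    set m0 : ↥M := a p with hm0def
    have hA : p * (m0 : G)⁻¹ * p⁻¹ ∈ M := Subgroup.Normal.conj_mem ‹M.Normal› _ (inv_mem m0.2) p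
    have hB : p * (x : G) * p⁻¹ ∈ M := Subgroup.Normal.conj_mem ‹M.Normal› _ x.2 p
    have h1 : (x⁻¹ * m0 : ↥M) ∈ K p := by
      rw [hK, mem_neumannSubgroup]
      push_cast
      have key : (x : G)⁻¹ * m0 * p * ((x : G)⁻¹ * m0)⁻¹ * p⁻¹
          = ((x : G)⁻¹ * p * x) * (((m0 : G))⁻¹ * p * m0)⁻¹ := by
        calc (x : G)⁻¹ * m0 * p * ((x : G)⁻¹ * m0)⁻¹ * p⁻¹
            = (x : G)⁻¹ * ((m0 : G) * (p * (m0 : G)⁻¹ * p⁻¹) * (p * (x : G) * p⁻¹)) * p⁻¹ * p := by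
              group
          _ = (x : G)⁻¹ * ((p * (x : G) * p⁻¹) * (p * (m0 : G)⁻¹ * p⁻¹) * (m0 : G)) * p⁻¹ * p := by
              rw [neumann_comm3 hM m0.2 hA hB]
          _ = ((x : G)⁻¹ * p * x) * (((m0 : G))⁻¹ * p * m0)⁻¹ := by group
      rw [key]
      exact mul_mem hpx (inv_mem hm0)
    have h2 : (a p)⁻¹ * x = (x⁻¹ * m0)⁻¹ := by rw [← hm0def]; group
    rw [h2]
    exact inv_mem h1
  obtain ⟨g, hgs, hfin, hle⟩ := Subgroup.exists_index_le_card_of_leftCoset_cover hcovers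
  have hgP : g ∈ P := (Finset.mem_filter.mp (hs ▸ hgs)).1
  have hm0 : ((a g : ↥M) : G)⁻¹ * g * (a g) ∈ H := ha' g hgs
  refine ⟨g, hgP, ?_, (K g).map M.subtype, ?_, ?_, ?_⟩
  · refine ⟨((a g : ↥M) : G)⁻¹ * g * (a g), hm0, ?_⟩
    rw [QuotientGroup.mk'_apply, QuotientGroup.eq]
    have h3 : (((a g : ↥M) : G)⁻¹ * g * (a g))⁻¹ * g
        = ((a g : ↥M) : G)⁻¹ * (g⁻¹ * (a g) * g⁻¹⁻¹) := by group
    rw [h3]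
    exact mul_mem (inv_mem (a g).2) (Subgroup.Normal.conj_mem ‹M.Normal› _ (a g).2 g⁻¹)
  · ext x
    simp only [Subgroup.coe_map, Set.mem_image, SetLike.mem_coe, Set.mem_setOf_eq]
    constructor
    · rintro ⟨n, hn, rfl⟩
      exact ⟨n.2, mem_neumannSubgroup.mp hn⟩
    · rintro ⟨hxM, hx⟩
      exact ⟨⟨x, hxM⟩, mem_neumannSubgroup.mpr hx, rfl⟩
  · have : ((K g).map M.subtype).relIndex M = (K g).index := by
      rw [Subgroup.relIndex, Subgroup.subgroupOf,
        Subgroup.comap_map_eq_self_of_injective (Subgroup.subtype_injective M)]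
    rw [this]
    exact hfin.1
  · have : ((K g).map M.subtype).relIndex M = (K g).index := by
      rw [Subgroup.relIndex, Subgroup.subgroupOf,
        Subgroup.comap_map_eq_self_of_injective (Subgroup.subtype_injective M)]
    rw [this]
    exact le_trans hle (by rw [hs]; exact Finset.card_filter_le _ _)
end
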